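/- arXiv:2404.17035 — 3 statements merged into one kernel-verified Lean document; each statement's English description precedes it below -/
import Mathlib

section
/- If k < 0, then the inclusion l^s_{ℂ,w} → h^{k,s}_{ℂ,w} is compact. -/
open Filter Topology

noncomputable section

/-- Membership in the weighted Sobolev sequence space `h^{k,s}_{ℂ,w}`. -/
def hMem (k s : ℝ) (w : ℤ → ℝ) (p : ℤ → ℂ) : Prop :=
  Summable fun m : ℤ => w m * (1 + |(m : ℝ)| ^ s) ^ k * ‖p m‖ ^ s

/-- The norm `‖p‖_{k,s,w} = (∑_{m∈ℤ} w_m (1+|m|^s)^k |p_m|^s)^{1/s}`. -/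
noncomputable def hNorm (k s : ℝ) (w : ℤ → ℝ) (p : ℤ → ℂ) : ℝ :=
  (∑' m : ℤ, w m * (1 + |(m : ℝ)| ^ s) ^ k * ‖p m‖ ^ s) ^ (1 / s)

/-- if `k < 0`, the inclusion `l^s_{ℂ,w} → h^{k,s}` is compact. -/
theorem stmt_7 (s k : ℝ) (hs : 1 ≤ s) (hk : k < 0) (w : ℤ → ℝ)
    (hw : ∀ m, 0 < w m) :
    ∀ F : ℕ → ℤ → ℂ, (∀ n, hMem 0 s w (F n)) →
      (∃ C : ℝ, ∀ n, hNorm 0 s w (F n) ≤ C) →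
      ∃ φ : ℕ → ℕ, StrictMono φ ∧ ∃ p : ℤ → ℂ, hMem k s w p ∧
        Tendsto (fun n => hNorm k s w (F (φ n) - p)) atTop (𝓝 0) := by
  intro F hF hCex
  obtain ⟨C, hC⟩ := hCex
  have hs0 : (0:ℝ) < s := lt_of_lt_of_le one_pos hs
  have hs0' : s ≠ 0 := ne_of_gt hs0
  have hbase : ∀ m : ℤ, (1:ℝ) ≤ 1 + |(m:ℝ)| ^ s :=
    fun m => le_add_of_nonneg_right (Real.rpow_nonneg (abs_nonneg _) s)
  have hfac_nonneg : ∀ m : ℤ, (0:ℝ) ≤ (1 + |(m:ℝ)| ^ s) ^ k :=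
    fun m => Real.rpow_nonneg (by linarith [hbase m]) k
  have hfac_le_one : ∀ m : ℤ, (1 + |(m:ℝ)| ^ s) ^ k ≤ 1 := by
    intro m
    have := Real.rpow_le_rpow_of_exponent_le (hbase m) (le_of_lt hk)
    simpa [Real.rpow_zero] using this
  have hsum : ∀ n, Summable fun m : ℤ => w m * ‖F n m‖ ^ s := by
    intro n
    have := hF n
    unfold hMem at this
    simpa [Real.rpow_zero, mul_one] using this
  set B : ℝ := (max C 0) ^ s with hBdef
  have hB0 : 0 ≤ B := Real.rpow_nonneg (le_max_right _ _) _
  have htsum_le : ∀ n, (∑' m : ℤ, w m * ‖F n m‖ ^ s) ≤ B := by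
    intro n
    have h1 : (∑' m : ℤ, w m * ‖F n m‖ ^ s) ^ (1/s) ≤ max C 0 := by
      have := hC n
      unfold hNorm at this
      simp only [Real.rpow_zero, mul_one] at this
      exact le_trans this (le_max_left _ _)
    have hnn : 0 ≤ ∑' m : ℤ, w m * ‖F n m‖ ^ s :=
      tsum_nonneg fun m => mul_nonneg (le_of_lt (hw m)) (Real.rpow_nonneg (norm_nonneg _) s)
    calc (∑' m : ℤ, w m * ‖F n m‖ ^ s)
        = ((∑' m : ℤ, w m * ‖F n m‖ ^ s) ^ (1/s)) ^ s := by
          rw [one_div, Real.rpow_inv_rpow hnn hs0']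
      _ ≤ (max C 0) ^ s := Real.rpow_le_rpow (Real.rpow_nonneg hnn _) h1 (le_of_lt hs0)
  have hcoord : ∀ n m, ‖F n m‖ ≤ (B / w m) ^ (1/s) := by
    intro n m
    have h1 : w m * ‖F n m‖ ^ s ≤ B :=
      le_trans (Summable.le_tsum (hsum n) m fun j _ => mul_nonneg (hw j).le (Real.rpow_nonneg (norm_nonneg _) s)) (htsum_le n)
    have h2 : ‖F n m‖ ^ s ≤ B / w m := (le_div_iff₀' (hw m)).mpr h1
    calc ‖F n m‖ = (‖F n m‖ ^ s) ^ (1/s) := by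
          rw [one_div, Real.rpow_rpow_inv (norm_nonneg _) hs0']
      _ ≤ (B / w m) ^ (1/s) := Real.rpow_le_rpow (Real.rpow_nonneg (norm_nonneg _) s) h2 (by positivity)
  -- compactness / diagonal argument
  have hK : IsCompact (Set.univ.pi fun m : ℤ => Metric.closedBall (0:ℂ) ((B / w m) ^ (1/s))) :=
    isCompact_univ_pi fun m => isCompact_closedBall _ _
  have hmemK : ∀ n, F n ∈ Set.univ.pi fun m : ℤ => Metric.closedBall (0:ℂ) ((B / w m) ^ (1/s)) := by
    intro n m _
    simpa [Complex.dist_eq] using hcoord n m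
  obtain ⟨p, -, φ, hφ, hconv⟩ := hK.tendsto_subseq hmemK
  have hpt : ∀ m, Tendsto (fun n => F (φ n) m) atTop (𝓝 (p m)) :=
    fun m => tendsto_pi_nhds.mp hconv m
  have habs_t : ∀ m, Tendsto (fun n => ‖F (φ n) m‖ ^ s) atTop
      (𝓝 (‖p m‖ ^ s)) := by
    intro m
    exact ((continuous_norm.tendsto (p m)).comp (hpt m)).rpow_const (Or.inr hs0.le)
  -- uniform bound for limits of partial sums
  have hfin : ∀ (c : ℤ → ℝ), (∀ m, 0 ≤ c m) → (∀ m, c m ≤ 1) →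
      ∀ T : Finset ℤ, ∑ m ∈ T, w m * c m * ‖p m‖ ^ s ≤ B := by
    intro c hc0 hc1 T
    have hTlim : Tendsto (fun n => ∑ m ∈ T, w m * c m * ‖F (φ n) m‖ ^ s) atTop
        (𝓝 (∑ m ∈ T, w m * c m * ‖p m‖ ^ s)) :=
      tendsto_finset_sum T fun m _ => (habs_t m).const_mul _
    refine le_of_tendsto hTlim (Filter.Eventually.of_forall fun n => ?_)
    calc ∑ m ∈ T, w m * c m * ‖F (φ n) m‖ ^ s
        ≤ ∑ m ∈ T, w m * ‖F (φ n) m‖ ^ s := by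
          apply Finset.sum_le_sum
          intro m _
          have h1 : w m * c m ≤ w m * 1 := mul_le_mul_of_nonneg_left (hc1 m) (hw m).le
          calc w m * c m * ‖F (φ n) m‖ ^ s
              ≤ w m * 1 * ‖F (φ n) m‖ ^ s :=
                mul_le_mul_of_nonneg_right h1 (Real.rpow_nonneg (norm_nonneg _) s)
            _ = w m * ‖F (φ n) m‖ ^ s := by ring
      _ ≤ ∑' m : ℤ, w m * ‖F (φ n) m‖ ^ s :=
          Summable.sum_le_tsum T (fun m _ => mul_nonneg (hw m).le (Real.rpow_nonneg (norm_nonneg _) s)) (hsum (φ n))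
      _ ≤ B := htsum_le (φ n)
  have hp_nonneg : ∀ (c : ℤ → ℝ), (∀ m, 0 ≤ c m) →
      ∀ m, 0 ≤ w m * c m * ‖p m‖ ^ s :=
    fun c hc0 m => mul_nonneg (mul_nonneg (hw m).le (hc0 m)) (Real.rpow_nonneg (norm_nonneg _) s)
  have hpsum : ∀ (c : ℤ → ℝ), (∀ m, 0 ≤ c m) → (∀ m, c m ≤ 1) →
      Summable (fun m => w m * c m * ‖p m‖ ^ s) :=
    fun c hc0 hc1 => summable_of_sum_le (Pi.le_def.mpr (hp_nonneg c hc0)) (hfin c hc0 hc1)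
  have hmemp : hMem k s w p := hpsum _ hfac_nonneg hfac_le_one
  have hpsum1 : Summable (fun m : ℤ => w m * ‖p m‖ ^ s) := by
    have := hpsum (fun _ => 1) (fun _ => zero_le_one) (fun _ => le_rfl)
    simpa [mul_one] using this
  have hptsum1 : ∑' m : ℤ, w m * ‖p m‖ ^ s ≤ B := by
    have := Summable.tsum_le_of_sum_le (hpsum (fun _ => 1) (fun _ => zero_le_one) (fun _ => le_rfl))
      (hfin (fun _ => 1) (fun _ => zero_le_one) (fun _ => le_rfl))
    simpa [mul_one] using this
  -- bound on differences
  have hdiff_bound : ∀ a b : ℂ, ‖a - b‖ ^ s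
      ≤ 2 ^ s * (‖a‖ ^ s + ‖b‖ ^ s) := by
    intro a b
    have h1 : ‖a - b‖ ≤ 2 * max (‖a‖) (‖b‖) := by
      have := norm_sub_le a b
      have h2 : ‖a‖ + ‖b‖
          ≤ 2 * max (‖a‖) (‖b‖) := by
        rw [two_mul]
        exact add_le_add (le_max_left _ _) (le_max_right _ _)
      linarith
    have h2 : ‖a - b‖ ^ s ≤ (2 * max (‖a‖) (‖b‖)) ^ s :=
      Real.rpow_le_rpow (norm_nonneg _) h1 hs0.le
    have h3 : (2 * max (‖a‖) (‖b‖)) ^ s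
        = 2 ^ s * max (‖a‖) (‖b‖) ^ s :=
      Real.mul_rpow (by norm_num) (le_max_of_le_left (norm_nonneg a))
    have h4 : max (‖a‖) (‖b‖) ^ s
        ≤ ‖a‖ ^ s + ‖b‖ ^ s := by
      rcases max_cases (‖a‖) (‖b‖) with ⟨h, _⟩ | ⟨h, _⟩ <;> rw [h]
      · exact le_add_of_nonneg_right (Real.rpow_nonneg (norm_nonneg b) s)
      · exact le_add_of_nonneg_left (Real.rpow_nonneg (norm_nonneg a) s)
    have h5 : 2 ^ s * max (‖a‖) (‖b‖) ^ s
        ≤ 2 ^ s * (‖a‖ ^ s + ‖b‖ ^ s) :=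
      mul_le_mul_of_nonneg_left h4 (Real.rpow_nonneg (by norm_num) s)
    calc ‖a - b‖ ^ s ≤ (2 * max (‖a‖) (‖b‖)) ^ s := h2
      _ = 2 ^ s * max (‖a‖) (‖b‖) ^ s := h3
      _ ≤ 2 ^ s * (‖a‖ ^ s + ‖b‖ ^ s) := h5
  have hdnn : ∀ n m, 0 ≤ w m * ‖F (φ n) m - p m‖ ^ s :=
    fun n m => mul_nonneg (hw m).le (Real.rpow_nonneg (norm_nonneg _) s)
  have hdsum : ∀ n, Summable (fun m : ℤ => w m * ‖F (φ n) m - p m‖ ^ s) := by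
    intro n
    have hmaj : Summable (fun m : ℤ => 2 ^ s * (w m * ‖F (φ n) m‖ ^ s
        + w m * ‖p m‖ ^ s)) := ((hsum (φ n)).add hpsum1).mul_left (2 ^ s)
    refine Summable.of_nonneg_of_le (hdnn n) (fun m => ?_) hmaj
    calc w m * ‖F (φ n) m - p m‖ ^ s
        ≤ w m * (2 ^ s * (‖F (φ n) m‖ ^ s + ‖p m‖ ^ s)) :=
          mul_le_mul_of_nonneg_left (hdiff_bound _ _) (hw m).le
      _ = 2 ^ s * (w m * ‖F (φ n) m‖ ^ s + w m * ‖p m‖ ^ s) := by ring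
  set D : ℝ := 2 ^ s * (B + B) with hDdef
  have hD0 : 0 ≤ D := mul_nonneg (Real.rpow_nonneg (by norm_num) s) (by linarith)
  have hdtsum : ∀ n, ∑' m : ℤ, w m * ‖F (φ n) m - p m‖ ^ s ≤ D := by
    intro n
    refine Summable.tsum_le_of_sum_le (hdsum n) fun T => ?_
    calc ∑ m ∈ T, w m * ‖F (φ n) m - p m‖ ^ s
        ≤ ∑ m ∈ T, 2 ^ s * (w m * ‖F (φ n) m‖ ^ s
            + w m * ‖p m‖ ^ s) := by
          refine Finset.sum_le_sum fun m _ => ?_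
          calc w m * ‖F (φ n) m - p m‖ ^ s
              ≤ w m * (2 ^ s * (‖F (φ n) m‖ ^ s + ‖p m‖ ^ s)) :=
                mul_le_mul_of_nonneg_left (hdiff_bound _ _) (hw m).le
            _ = 2 ^ s * (w m * ‖F (φ n) m‖ ^ s
                + w m * ‖p m‖ ^ s) := by ring
      _ = 2 ^ s * (∑ m ∈ T, w m * ‖F (φ n) m‖ ^ s
            + ∑ m ∈ T, w m * ‖p m‖ ^ s) := by
          rw [← Finset.sum_add_distrib, Finset.mul_sum]
      _ ≤ 2 ^ s * (B + B) := by
          refine mul_le_mul_of_nonneg_left (add_le_add ?_ ?_)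
            (Real.rpow_nonneg (by norm_num) s)
          · exact le_trans (Summable.sum_le_tsum T (fun m _ => mul_nonneg (hw m).le (Real.rpow_nonneg (norm_nonneg _) s))
              (hsum (φ n))) (htsum_le (φ n))
          · exact le_trans (Summable.sum_le_tsum T (fun m _ => mul_nonneg (hw m).le (Real.rpow_nonneg (norm_nonneg _) s))
              hpsum1) hptsum1
  have hg_nonneg : ∀ n m, 0 ≤ w m * (1 + |(m:ℝ)| ^ s) ^ k
      * ‖F (φ n) m - p m‖ ^ s :=
    fun n m => mul_nonneg (mul_nonneg (hw m).le (hfac_nonneg m)) (Real.rpow_nonneg (norm_nonneg _) s)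
  have hg_le : ∀ n m, w m * (1 + |(m:ℝ)| ^ s) ^ k * ‖F (φ n) m - p m‖ ^ s
      ≤ w m * ‖F (φ n) m - p m‖ ^ s := by
    intro n m
    have h1 : w m * (1 + |(m:ℝ)| ^ s) ^ k ≤ w m * 1 :=
      mul_le_mul_of_nonneg_left (hfac_le_one m) (hw m).le
    calc w m * (1 + |(m:ℝ)| ^ s) ^ k * ‖F (φ n) m - p m‖ ^ s
        ≤ w m * 1 * ‖F (φ n) m - p m‖ ^ s :=
          mul_le_mul_of_nonneg_right h1 (Real.rpow_nonneg (norm_nonneg _) s)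
      _ = w m * ‖F (φ n) m - p m‖ ^ s := by ring
  have hgsum : ∀ n, Summable (fun m : ℤ => w m * (1 + |(m:ℝ)| ^ s) ^ k
      * ‖F (φ n) m - p m‖ ^ s) :=
    fun n => Summable.of_nonneg_of_le (hg_nonneg n) (hg_le n) (hdsum n)
  -- the key convergence of the weighted sums
  have key : Tendsto (fun n => ∑' m : ℤ, w m * (1 + |(m:ℝ)| ^ s) ^ k
      * ‖F (φ n) m - p m‖ ^ s) atTop (𝓝 0) := by
    rw [Metric.tendsto_atTop]
    intro ε hε
    set δ : ℝ := (ε / 2) / (D + 1) with hδdef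
    have hδ0 : 0 < δ := div_pos (half_pos hε) (by linarith)
    have hδD : δ * D ≤ ε / 2 := by
      have h1 : δ * D ≤ δ * (D + 1) := mul_le_mul_of_nonneg_left (by linarith) hδ0.le
      have h2 : δ * (D + 1) = ε / 2 := div_mul_cancel₀ _ (by linarith)
      linarith
    -- choose M with (1 + M^s)^k < δ
    have hbase_t : Tendsto (fun M : ℕ => 1 + (M:ℝ) ^ s) atTop atTop :=
      tendsto_atTop_add_const_left _ 1
        ((tendsto_rpow_atTop hs0).comp tendsto_natCast_atTop_atTop)
    have hk_t : Tendsto (fun M : ℕ => (1 + (M:ℝ) ^ s) ^ k) atTop (𝓝 0) := by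
      have h1 : Tendsto (fun x : ℝ => x ^ k) atTop (𝓝 0) := by
        have := tendsto_rpow_neg_atTop (y := -k) (by linarith)
        simpa using this
      exact h1.comp hbase_t
    obtain ⟨M, hM⟩ := (hk_t.eventually (gt_mem_nhds hδ0)).exists
    set T : Finset ℤ := Finset.Icc (-(M:ℤ)) (M:ℤ) with hT
    have hfacM : ∀ m : ℤ, m ∉ T → (1 + |(m:ℝ)| ^ s) ^ k ≤ (1 + (M:ℝ) ^ s) ^ k := by
      intro m hm
      have h1 : (M:ℝ) ≤ |(m:ℝ)| := by
        have h2 : (M:ℤ) ≤ m ∨ m ≤ -(M:ℤ) := by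
          simp only [hT, Finset.mem_Icc, not_and_or, not_le] at hm
          omega
        rcases h2 with h2 | h2
        · have h3 : (M:ℝ) ≤ (m:ℝ) := by exact_mod_cast h2
          exact h3.trans (le_abs_self _)
        · have h3 : (M:ℝ) ≤ -(m:ℝ) := by
            have h4 : (M:ℤ) ≤ -m := by omega
            exact_mod_cast h4
          exact h3.trans (neg_le_abs _)
      have h3 : 1 + (M:ℝ) ^ s ≤ 1 + |(m:ℝ)| ^ s := by
        have := Real.rpow_le_rpow (Nat.cast_nonneg M) h1 hs0.le
        linarith
      exact Real.rpow_le_rpow_of_nonpos (by positivity) h3 hk.le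
    have htail : ∀ n, (∑' m : ↑((↑T : Set ℤ)ᶜ), w ↑m * (1 + |((m:ℤ):ℝ)| ^ s) ^ k
        * ‖F (φ n) ↑m - p ↑m‖ ^ s) ≤ δ * D := by
      intro n
      have hsub1 : Summable (fun m : ↑((↑T : Set ℤ)ᶜ) => w ↑m * (1 + |((m:ℤ):ℝ)| ^ s) ^ k
          * ‖F (φ n) ↑m - p ↑m‖ ^ s) := (hgsum n).subtype _
      have hsub2 : Summable (fun m : ↑((↑T : Set ℤ)ᶜ) =>
          δ * (w ↑m * ‖F (φ n) ↑m - p ↑m‖ ^ s)) :=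
        ((hdsum n).subtype _).mul_left δ
      have hterm : ∀ m : ↑((↑T : Set ℤ)ᶜ), w ↑m * (1 + |((m:ℤ):ℝ)| ^ s) ^ k
          * ‖F (φ n) ↑m - p ↑m‖ ^ s
          ≤ δ * (w ↑m * ‖F (φ n) ↑m - p ↑m‖ ^ s) := by
        rintro ⟨m, hm⟩
        have hm' : m ∉ T := by simpa using hm
        have h1 : (1 + |(m:ℝ)| ^ s) ^ k ≤ δ := (hfacM m hm').trans hM.le
        have h2 : w m * (1 + |(m:ℝ)| ^ s) ^ k ≤ w m * δ :=
          mul_le_mul_of_nonneg_left h1 (hw m).le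
        calc w m * (1 + |(m:ℝ)| ^ s) ^ k * ‖F (φ n) m - p m‖ ^ s
            ≤ w m * δ * ‖F (φ n) m - p m‖ ^ s :=
              mul_le_mul_of_nonneg_right h2 (Real.rpow_nonneg (norm_nonneg _) s)
          _ = δ * (w m * ‖F (φ n) m - p m‖ ^ s) := by ring
      calc (∑' m : ↑((↑T : Set ℤ)ᶜ), w ↑m * (1 + |((m:ℤ):ℝ)| ^ s) ^ k
            * ‖F (φ n) ↑m - p ↑m‖ ^ s)
          ≤ ∑' m : ↑((↑T : Set ℤ)ᶜ), δ * (w ↑m * ‖F (φ n) ↑m - p ↑m‖ ^ s) :=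
            Summable.tsum_le_tsum hterm hsub1 hsub2
        _ = δ * ∑' m : ↑((↑T : Set ℤ)ᶜ), w ↑m * ‖F (φ n) ↑m - p ↑m‖ ^ s :=
            tsum_mul_left
        _ ≤ δ * D := by
            refine mul_le_mul_of_nonneg_left ?_ hδ0.le
            exact le_trans (Summable.tsum_subtype_le _ _ (hdnn n) (hdsum n)) (hdtsum n)
    have hhead : Tendsto (fun n => ∑ m ∈ T, w m * (1 + |(m:ℝ)| ^ s) ^ k
        * ‖F (φ n) m - p m‖ ^ s) atTop (𝓝 0) := by
      have hterm : ∀ m ∈ T, Tendsto (fun n => w m * (1 + |(m:ℝ)| ^ s) ^ k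
          * ‖F (φ n) m - p m‖ ^ s) atTop (𝓝 0) := by
        intro m _
        have h1 : Tendsto (fun n => F (φ n) m - p m) atTop (𝓝 0) := by
          simpa using (hpt m).sub (tendsto_const_nhds (x := p m))
        have h2 : Tendsto (fun n => ‖F (φ n) m - p m‖) atTop (𝓝 0) := by
          simpa [Function.comp_def] using (continuous_norm.tendsto 0).comp h1
        have h3 : Tendsto (fun n => ‖F (φ n) m - p m‖ ^ s) atTop (𝓝 0) := by
          have := h2.rpow_const (Or.inr hs0.le)
          simpa [Real.zero_rpow hs0'] using this
        have h4 := h3.const_mul (w m * (1 + |(m:ℝ)| ^ s) ^ k)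
        simpa [mul_assoc] using h4
      have := tendsto_finset_sum T hterm
      simpa using this
    obtain ⟨N, hN⟩ := (Metric.tendsto_atTop.mp hhead) (ε / 2) (half_pos hε)
    refine ⟨N, fun n hn => ?_⟩
    have hsplit := Summable.sum_add_tsum_compl (s := T) (hgsum n)
    have hheadnn : 0 ≤ ∑ m ∈ T, w m * (1 + |(m:ℝ)| ^ s) ^ k
        * ‖F (φ n) m - p m‖ ^ s :=
      Finset.sum_nonneg fun m _ => hg_nonneg n m
    have hhead_lt : ∑ m ∈ T, w m * (1 + |(m:ℝ)| ^ s) ^ k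
        * ‖F (φ n) m - p m‖ ^ s < ε / 2 := by
      have := hN n hn
      rw [Real.dist_eq, sub_zero, abs_of_nonneg hheadnn] at this
      exact this
    have htsum_nn : 0 ≤ ∑' m : ℤ, w m * (1 + |(m:ℝ)| ^ s) ^ k
        * ‖F (φ n) m - p m‖ ^ s := tsum_nonneg (hg_nonneg n)
    rw [Real.dist_eq, sub_zero, abs_of_nonneg htsum_nn]
    calc (∑' m : ℤ, w m * (1 + |(m:ℝ)| ^ s) ^ k * ‖F (φ n) m - p m‖ ^ s)
        = (∑ m ∈ T, w m * (1 + |(m:ℝ)| ^ s) ^ k * ‖F (φ n) m - p m‖ ^ s)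
          + ∑' m : ↑((↑T : Set ℤ)ᶜ), w ↑m * (1 + |((m:ℤ):ℝ)| ^ s) ^ k
            * ‖F (φ n) ↑m - p ↑m‖ ^ s := hsplit.symm
      _ < ε / 2 + ε / 2 := add_lt_add_of_lt_of_le hhead_lt ((htail n).trans hδD)
      _ = ε := by ring
  refine ⟨φ, hφ, p, hmemp, ?_⟩
  have heq : ∀ n, hNorm k s w (F (φ n) - p)
      = (∑' m : ℤ, w m * (1 + |(m:ℝ)| ^ s) ^ k
        * ‖F (φ n) m - p m‖ ^ s) ^ (1 / s) := by
    intro n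
    unfold hNorm
    simp [Pi.sub_apply]
  have hfinal := key.rpow_const (Or.inr (by positivity : (0:ℝ) ≤ 1 / s))
  rw [Real.zero_rpow (by positivity : (1:ℝ) / s ≠ 0)] at hfinal
  simpa [heq] using hfinal
end
end

section
/- Under the hypotheses s > t ≥ 1, k > (s−t)/(st), and c₁ ≤ w_m^{t/s}/ŵ_m ≤ c₂ for all m ∈ ℤ, the inclusion h^{k,s}_{ℂ,w} → l^t_{ℂ,ŵ} is a compact operator. -/
open Filter Topology

noncomputable section

/-- Young-type inequality: `u*v ≤ u^a + v^b` for conjugate exponents. -/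
lemma young_aux {u v a b : ℝ} (hu : 0 ≤ u) (hv : 0 ≤ v) (ha : 0 < a) (hb : 0 < b)
    (hab : 1/a + 1/b = 1) : u * v ≤ u ^ a + v ^ b := by
  have key : ∀ x y p q : ℝ, 0 ≤ x → 0 ≤ y → 0 < p → 0 < q → 1/p + 1/q = 1 →
      y ^ q ≤ x ^ p → x * y ≤ x ^ p := by
    intro x y p q hx hy hp hq hpq h
    rcases eq_or_lt_of_le hx with hx0 | hx0
    · have : y ^ q ≤ 0 := by simpa [← hx0, Real.zero_rpow hp.ne'] using h
      have hy0 : y ^ q = 0 := le_antisymm this (Real.rpow_nonneg hy q)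
      have : y = 0 := by
        by_contra hne
        have : (0:ℝ) < y := lt_of_le_of_ne hy (Ne.symm hne)
        exact absurd hy0 (ne_of_gt (Real.rpow_pos_of_pos this q))
      simp [this, ← hx0, Real.rpow_nonneg]
    · have h1 : (y ^ q) ^ (1/q) ≤ (x ^ p) ^ (1/q) :=
        Real.rpow_le_rpow (Real.rpow_nonneg hy q) h (by positivity)
      have h2 : (y ^ q) ^ (1/q) = y := by
        rw [← Real.rpow_mul hy, mul_one_div_cancel hq.ne', Real.rpow_one]
      have h3 : (x ^ p) ^ (1/q) = x ^ (p/q) := by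
        rw [← Real.rpow_mul hx]; congr 1; ring
      rw [h2, h3] at h1
      calc x * y ≤ x * x ^ (p/q) := mul_le_mul_of_nonneg_left h1 hx
        _ = x ^ (1 + p/q) := by rw [Real.rpow_add hx0, Real.rpow_one]
        _ = x ^ p := by
            congr 1
            field_simp at hpq ⊢
            linarith
  rcases le_total (v ^ b) (u ^ a) with h | h
  · exact le_add_of_le_of_nonneg (key u v a b hu hv ha hb hab h)
      (Real.rpow_nonneg hv b)
  · have := key v u b a hv hu hb ha (by linarith) h
    rw [mul_comm] at this
    exact le_add_of_nonneg_of_le (Real.rpow_nonneg hu a) this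

/-- `|x-y|^r ≤ 2^r (|x|^r + |y|^r)`. -/
lemma abs_sub_rpow_le (x y : ℂ) {r : ℝ} (hr : 0 ≤ r) :
    ‖x - y‖ ^ r ≤ 2 ^ r * (‖x‖ ^ r + ‖y‖ ^ r) := by
  have h1 : ‖x - y‖ ≤ ‖x‖ + ‖y‖ := by
    simpa using norm_sub_le x y
  have h2 : ‖x‖ + ‖y‖ ≤ 2 * max (‖x‖) (‖y‖) := by
    rcases max_cases (‖x‖) (‖y‖) with ⟨he, hl⟩ | ⟨he, hl⟩ <;> rw [he] <;>
      linarith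
  calc ‖x - y‖ ^ r ≤ (2 * max (‖x‖) (‖y‖)) ^ r :=
        Real.rpow_le_rpow (norm_nonneg _) (h1.trans h2) hr
    _ = 2 ^ r * (max (‖x‖) (‖y‖)) ^ r := by
        rw [Real.mul_rpow (by norm_num) (le_max_of_le_left (norm_nonneg _))]
    _ ≤ 2 ^ r * (‖x‖ ^ r + ‖y‖ ^ r) := by
        apply mul_le_mul_of_nonneg_left _ (Real.rpow_nonneg (by norm_num) r)
        rcases max_cases (‖x‖) (‖y‖) with ⟨he, _⟩ | ⟨he, _⟩ <;> rw [he]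
        · exact le_add_of_le_of_nonneg le_rfl (Real.rpow_nonneg (norm_nonneg _) r)
        · exact le_add_of_nonneg_of_le (Real.rpow_nonneg (norm_nonneg _) r) le_rfl

/-- Key pointwise estimate via Young's inequality. -/
lemma key_pointwise {s t k W x z δ : ℝ} (ht0 : 0 < t) (hts : t < s)
    (hW : 0 ≤ W) (hx : 0 < x) (hz : 0 ≤ z) (hδ : 0 < δ) :
    W ^ (t/s) * z ^ t ≤
      δ ^ (s/t) * (W * x ^ k * z ^ s) + δ ^ (-(s/(s-t))) * x ^ (-(k*t/(s-t))) := by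
  have hs0 : 0 < s := ht0.trans hts
  have hst : 0 < s - t := by linarith
  have hxk : (0:ℝ) ≤ x ^ k := (Real.rpow_pos_of_pos hx k).le
  have hzs : (0:ℝ) ≤ z ^ s := Real.rpow_nonneg hz s
  have hP : (0:ℝ) ≤ W * x ^ k * z ^ s := by positivity
  have e1 : (W * x ^ k * z ^ s) ^ (t/s) = W ^ (t/s) * x ^ (k*t/s) * z ^ t := by
    rw [Real.mul_rpow (mul_nonneg hW hxk) hzs, Real.mul_rpow hW hxk,
      ← Real.rpow_mul hx.le, ← Real.rpow_mul hz,
      show k * (t/s) = k*t/s by ring, show s * (t/s) = t by field_simp]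
  have hxx : x ^ (k*t/s) * x ^ (-(k*t/s)) = 1 := by
    rw [← Real.rpow_add hx]; simp
  have e2 : W ^ (t/s) * z ^ t
      = (δ * (W * x ^ k * z ^ s) ^ (t/s)) * (x ^ (-(k*t/s)) / δ) := by
    rw [e1]
    have hxx' : x ^ (k*t/s) * x ^ (-(k*t)/s) = 1 := by rw [neg_div]; exact hxx
    have hδ1 : δ * δ⁻¹ = 1 := mul_inv_cancel₀ hδ.ne'
    linear_combination (-(W ^ (t/s) * z ^ t)) * hδ1 + (-(W ^ (t/s) * z ^ t * δ * δ⁻¹)) * hxx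
  have hab : 1/(s/t) + 1/(s/(s-t)) = 1 := by
    rw [one_div_div, one_div_div, ← add_div]
    field_simp
    ring
  have e4 : (δ * (W * x ^ k * z ^ s) ^ (t/s)) ^ (s/t)
      = δ ^ (s/t) * (W * x ^ k * z ^ s) := by
    rw [Real.mul_rpow hδ.le (Real.rpow_nonneg hP _), ← Real.rpow_mul hP,
      show (t/s) * (s/t) = 1 by field_simp, Real.rpow_one]
  have e5 : (x ^ (-(k*t/s)) / δ) ^ (s/(s-t))
      = δ ^ (-(s/(s-t))) * x ^ (-(k*t/(s-t))) := by
    rw [Real.div_rpow (Real.rpow_nonneg hx.le _) hδ.le, ← Real.rpow_mul hx.le,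
      show (-(k*t/s)) * (s/(s-t)) = -(k*t/(s-t)) by field_simp,
      Real.rpow_neg hδ.le, div_eq_mul_inv, mul_comm]
  calc W ^ (t/s) * z ^ t
      = (δ * (W * x ^ k * z ^ s) ^ (t/s)) * (x ^ (-(k*t/s)) / δ) := e2
    _ ≤ (δ * (W * x ^ k * z ^ s) ^ (t/s)) ^ (s/t) + (x ^ (-(k*t/s)) / δ) ^ (s/(s-t)) :=
        young_aux (by positivity) (by positivity) (by positivity) (by positivity) hab
    _ = _ := by rw [e4, e5]

lemma summable_E {s γ : ℝ} (hs0 : 0 < s) (h1 : 1 < s * γ) :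
    Summable fun m : ℤ => (1 + |(m : ℝ)| ^ s) ^ (-γ) := by
  have hγ : 0 < γ := by nlinarith
  apply (Finset.summable_compl_iff ({0} : Finset ℤ)).mp
  refine Summable.of_nonneg_of_le ?_ ?_
    ((Real.summable_abs_int_rpow h1).subtype {x : ℤ | x ∉ ({0} : Finset ℤ)})
  · intro m
    have : (0:ℝ) < 1 + |((m:ℤ):ℝ)| ^ s := by positivity
    positivity
  · intro m
    have hm0 : (m : ℤ) ≠ 0 := by simpa using m.2
    have hm : (1:ℝ) ≤ |((m : ℤ) : ℝ)| := by
      rw [← Int.cast_abs]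
      exact_mod_cast Int.one_le_abs hm0
    have ha1 : (1:ℝ) ≤ |((m : ℤ) : ℝ)| ^ s := Real.one_le_rpow hm hs0.le
    calc (1 + |((m : ℤ) : ℝ)| ^ s) ^ (-γ) ≤ (|((m : ℤ) : ℝ)| ^ s) ^ (-γ) :=
          Real.rpow_le_rpow_of_nonpos (by linarith) (by linarith) (by linarith)
      _ = |((m : ℤ) : ℝ)| ^ (-(s * γ)) := by
          rw [← Real.rpow_mul (abs_nonneg _)]
          congr 1; ring

/-- under `s > t ≥ 1`, `k > (s-t)/(st)` and
`c₁ ≤ w_m^{t/s}/wh_m ≤ c₂`, the inclusion `h^{k,s}_{ℂ,w} → l^t_{ℂ,wh}` is a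
compact operator. -/
theorem stmt_11 (s t k c₁ c₂ : ℝ) (ht : 1 ≤ t) (hts : t < s)
    (hk : (s - t) / (s * t) < k) (w wh : ℤ → ℝ)
    (hw : ∀ m, 0 < w m) (hwh : ∀ m, 0 < wh m) (hc₁ : 0 < c₁)
    (hbd : ∀ m : ℤ, c₁ ≤ w m ^ (t / s) / wh m ∧ w m ^ (t / s) / wh m ≤ c₂) :
    ∀ F : ℕ → ℤ → ℂ, (∀ n, hMem k s w (F n)) →
      (∃ C : ℝ, ∀ n, hNorm k s w (F n) ≤ C) →
      ∃ φ : ℕ → ℕ, StrictMono φ ∧ ∃ p : ℤ → ℂ, hMem 0 t wh p ∧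
        Tendsto (fun n => hNorm 0 t wh (F (φ n) - p)) atTop (𝓝 0) := by
  intro F hFmem hFbd
  obtain ⟨C, hC⟩ := hFbd
  have ht0 : 0 < t := lt_of_lt_of_le one_pos ht
  have hs0 : 0 < s := ht0.trans hts
  have hst : 0 < s - t := by linarith
  have hbase : ∀ m : ℤ, (0:ℝ) < 1 + |(m:ℝ)| ^ s := fun m => by positivity
  set A : (ℤ → ℂ) → ℤ → ℝ :=
    fun q m => w m * (1 + |(m : ℝ)| ^ s) ^ k * ‖q m‖ ^ s with hAdef
  set E : ℤ → ℝ := fun m => (1 + |(m:ℝ)| ^ s) ^ (-(k*t/(s-t))) with hEdef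
  have hA0 : ∀ q m, 0 ≤ A q m := fun q m =>
    mul_nonneg (mul_nonneg (hw m).le (Real.rpow_nonneg (hbase m).le k))
      (Real.rpow_nonneg (norm_nonneg _) s)
  have hE0 : ∀ m, 0 ≤ E m := fun m => Real.rpow_nonneg (hbase m).le _
  have hA : ∀ n, Summable (A (F n)) := fun n => hFmem n
  simp only [hNorm] at hC
  have hC0 : 0 ≤ C :=
    le_trans (Real.rpow_nonneg (tsum_nonneg (fun m => hA0 (F 0) m)) _) (hC 0)
  have hTs : ∀ n, ∑' m, A (F n) m ≤ C ^ s := by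
    intro n
    have h0 : 0 ≤ ∑' m, A (F n) m := tsum_nonneg (hA0 _)
    calc ∑' m, A (F n) m = ((∑' m, A (F n) m) ^ (1/s)) ^ s := by
          rw [← Real.rpow_mul h0, one_div_mul_cancel hs0.ne', Real.rpow_one]
      _ ≤ C ^ s := Real.rpow_le_rpow (Real.rpow_nonneg h0 _) (hC n) hs0.le
  -- summability of the weight function E
  have hkst : 1 < s * (k*t/(s-t)) := by
    have h1 : s - t < k * (s*t) := (div_lt_iff₀ (by positivity)).mp hk
    rw [show s * (k*t/(s-t)) = k*(s*t)/(s-t) by ring, lt_div_iff₀ hst]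
    linarith
  have hE : Summable E := summable_E hs0 hkst
  -- key pointwise estimate
  have keyG : ∀ (q : ℤ → ℂ) (δ : ℝ), 0 < δ → ∀ m,
      wh m * ‖q m‖ ^ t
        ≤ c₁⁻¹ * (δ ^ (s/t) * A q m + δ ^ (-(s/(s-t))) * E m) := by
    intro q δ hδ m
    have hwh1 : wh m ≤ c₁⁻¹ * w m ^ (t/s) := by
      have h' : c₁ * wh m ≤ w m ^ (t/s) := (le_div_iff₀ (hwh m)).mp (hbd m).1
      rw [← inv_mul_cancel_left₀ hc₁.ne' (wh m)]
      exact mul_le_mul_of_nonneg_left h' (inv_nonneg.mpr hc₁.le)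
    have h2 : wh m * ‖q m‖ ^ t
        ≤ c₁⁻¹ * (w m ^ (t/s) * ‖q m‖ ^ t) := by
      rw [← mul_assoc]
      exact mul_le_mul_of_nonneg_right hwh1 (Real.rpow_nonneg (norm_nonneg _) t)
    refine h2.trans (mul_le_mul_of_nonneg_left ?_ (inv_nonneg.mpr hc₁.le))
    exact key_pointwise ht0 hts (hw m).le (hbase m) (norm_nonneg _) hδ
  -- extraction of a pointwise convergent subsequence
  set R : ℤ → ℝ := fun m => (C ^ s / (w m * (1 + |(m:ℝ)| ^ s) ^ k)) ^ (1/s) with hRdef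
  have hmemK : ∀ n, F n ∈ Set.pi Set.univ (fun m => Metric.closedBall (0:ℂ) (R m)) := by
    intro n m _
    rw [Metric.mem_closedBall, dist_zero_right]
    have hd : 0 < w m * (1 + |(m:ℝ)| ^ s) ^ k :=
      mul_pos (hw m) (Real.rpow_pos_of_pos (hbase m) k)
    have h1 : A (F n) m ≤ C ^ s :=
      le_trans (Summable.le_tsum (hA n) m fun j _ => hA0 _ j) (hTs n)
    have h2 : ‖F n m‖ ^ s ≤ C ^ s / (w m * (1 + |(m:ℝ)| ^ s) ^ k) :=
      (le_div_iff₀' hd).mpr h1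
    have h3 : (‖F n m‖ ^ s) ^ (1/s) = ‖F n m‖ := by
      rw [← Real.rpow_mul (norm_nonneg _), mul_one_div_cancel hs0.ne',
        Real.rpow_one]
    rw [← h3]
    exact Real.rpow_le_rpow (Real.rpow_nonneg (norm_nonneg _) s) h2 (by positivity)
  obtain ⟨p, -, φ, hφ, hconv⟩ :=
    (isCompact_univ_pi fun m => isCompact_closedBall (0:ℂ) (R m)).tendsto_subseq hmemK
  have hcoord : ∀ m, Tendsto (fun n => F (φ n) m) atTop (𝓝 (p m)) := fun m =>
    tendsto_pi_nhds.1 hconv m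
  -- continuity helpers
  have hconts : Continuous fun x : ℝ => x ^ s :=
    continuous_iff_continuousAt.2 fun x => Real.continuousAt_rpow_const x s (Or.inr hs0.le)
  have hcontt : Continuous fun x : ℝ => x ^ t :=
    continuous_iff_continuousAt.2 fun x => Real.continuousAt_rpow_const x t (Or.inr ht0.le)
  have hAcoord : ∀ m, Tendsto (fun n => A (F (φ n)) m) atTop (𝓝 (A p m)) := by
    intro m
    have h1 : Tendsto (fun n => ‖F (φ n) m‖) atTop (𝓝 (‖p m‖)) :=
      (continuous_norm.tendsto _).comp (hcoord m)
    have h2 : Tendsto (fun n => ‖F (φ n) m‖ ^ s) atTop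
        (𝓝 (‖p m‖ ^ s)) := (hconts.tendsto _).comp h1
    exact h2.const_mul _
  -- Fatou: the limit has finite h-norm
  have hApS : ∀ S : Finset ℤ, ∑ m ∈ S, A p m ≤ C ^ s := by
    intro S
    have hn : ∀ n, ∑ m ∈ S, A (F (φ n)) m ≤ C ^ s := fun n =>
      le_trans (Summable.sum_le_tsum S (fun m _ => hA0 _ m) (hA (φ n))) (hTs (φ n))
    exact le_of_tendsto (tendsto_finset_sum S (fun m _ => hAcoord m))
      (Eventually.of_forall hn)
  have hApSummable : Summable (A p) := summable_of_sum_le (fun m => hA0 p m) hApS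
  have hApT : ∑' m, A p m ≤ C ^ s := Summable.tsum_le_of_sum_le hApSummable hApS
  -- difference bounds
  have hdiff : ∀ n m, A (F (φ n) - p) m ≤ 2 ^ s * (A (F (φ n)) m + A p m) := by
    intro n m
    have h := abs_sub_rpow_le (F (φ n) m) (p m) hs0.le
    have hpos : 0 ≤ w m * (1 + |(m:ℝ)| ^ s) ^ k :=
      mul_nonneg (hw m).le (Real.rpow_nonneg (hbase m).le k)
    have he : A (F (φ n) - p) m
        = w m * (1 + |(m:ℝ)| ^ s) ^ k * ‖F (φ n) m - p m‖ ^ s := by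
      simp [hAdef, Pi.sub_apply]
    rw [he]
    calc w m * (1 + |(m:ℝ)| ^ s) ^ k * ‖F (φ n) m - p m‖ ^ s
        ≤ w m * (1 + |(m:ℝ)| ^ s) ^ k *
          (2 ^ s * (‖F (φ n) m‖ ^ s + ‖p m‖ ^ s)) :=
          mul_le_mul_of_nonneg_left h hpos
      _ = 2 ^ s * (A (F (φ n)) m + A p m) := by simp only [hAdef]; ring
  have hdiffSummable : ∀ n, Summable (A (F (φ n) - p)) := fun n =>
    Summable.of_nonneg_of_le (fun m => hA0 _ m) (hdiff n)
      (((hA (φ n)).add hApSummable).mul_left (2 ^ s))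
  set D : ℝ := 2 ^ s * (C ^ s + C ^ s) with hDdef
  have hD0 : 0 ≤ D := by
    have : (0:ℝ) ≤ C ^ s := Real.rpow_nonneg hC0 s
    positivity
  have hdiffT : ∀ n, ∑' m, A (F (φ n) - p) m ≤ D := by
    intro n
    calc ∑' m, A (F (φ n) - p) m
        ≤ ∑' m, 2 ^ s * (A (F (φ n)) m + A p m) :=
          Summable.tsum_le_tsum (hdiff n) (hdiffSummable n)
            (((hA (φ n)).add hApSummable).mul_left (2 ^ s))
      _ = 2 ^ s * ((∑' m, A (F (φ n)) m) + ∑' m, A p m) := by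
          rw [tsum_mul_left, Summable.tsum_add (hA (φ n)) hApSummable]
      _ ≤ D := by
          rw [hDdef]
          exact mul_le_mul_of_nonneg_left (add_le_add (hTs (φ n)) hApT)
            (Real.rpow_nonneg (by norm_num) s)
  -- the l^t sums
  set G : ℕ → ℤ → ℝ := fun n m => wh m * ‖F (φ n) m - p m‖ ^ t with hGdef
  have hG0 : ∀ n m, 0 ≤ G n m := fun n m =>
    mul_nonneg (hwh m).le (Real.rpow_nonneg (norm_nonneg _) t)
  have hGle : ∀ n (δ : ℝ), 0 < δ → ∀ m,
      G n m ≤ c₁⁻¹ * (δ ^ (s/t) * A (F (φ n) - p) m + δ ^ (-(s/(s-t))) * E m) :=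
    fun n δ hδ m => keyG (F (φ n) - p) δ hδ m
  have hGsum : ∀ n, Summable (G n) := fun n =>
    Summable.of_nonneg_of_le (hG0 n) (hGle n 1 one_pos)
      ((((hdiffSummable n).mul_left ((1:ℝ) ^ (s/t))).add
        (hE.mul_left ((1:ℝ) ^ (-(s/(s-t)))))).mul_left c₁⁻¹)
  set u : ℕ → ℝ := fun n => ∑' m, G n m with hudef
  have hu0 : ∀ n, 0 ≤ u n := fun n => tsum_nonneg (hG0 n)
  -- the main convergence statement
  have hu : Tendsto u atTop (𝓝 0) := by
    rw [Metric.tendsto_atTop]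
    intro ε hε
    set X := c₁⁻¹ * D with hXdef
    have hX0 : 0 ≤ X := mul_nonneg (inv_nonneg.mpr hc₁.le) hD0
    set η := ε / (3*(X+1)) with hηdef
    have hη : 0 < η := by positivity
    set δ := η ^ (t/s) with hδdef
    have hδ : 0 < δ := Real.rpow_pos_of_pos hη _
    have hδst : δ ^ (s/t) = η := by
      rw [hδdef, ← Real.rpow_mul hη.le, show (t/s) * (s/t) = 1 by field_simp,
        Real.rpow_one]
    have hmain : X * η < ε/3 := by
      rw [hηdef, mul_div_assoc']
      rw [div_lt_div_iff₀ (by positivity) (by norm_num : (0:ℝ) < 3)]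
      nlinarith
    have hEtail : ∀ᶠ S : Finset ℤ in atTop,
        (∑' m : {x : ℤ // x ∉ S}, c₁⁻¹ * (δ ^ (-(s/(s-t))) * E ↑m)) < ε/3 :=
      (tendsto_tsum_compl_atTop_zero
        (fun m => c₁⁻¹ * (δ ^ (-(s/(s-t))) * E m))).eventually
        (gt_mem_nhds (by positivity))
    obtain ⟨S, hS⟩ := hEtail.exists
    have hGcoord : ∀ m, Tendsto (fun n => G n m) atTop (𝓝 0) := by
      intro m
      have h1 : Tendsto (fun n => F (φ n) m - p m) atTop (𝓝 0) := by
        simpa using (hcoord m).sub_const (p m)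
      have h2 : Tendsto (fun n => ‖F (φ n) m - p m‖) atTop (𝓝 0) := by
        simpa [Function.comp_def] using (continuous_norm.tendsto 0).comp h1
      have h3 : Tendsto (fun n => ‖F (φ n) m - p m‖ ^ t) atTop (𝓝 0) := by
        have := (hcontt.tendsto 0).comp h2
        simpa [Function.comp_def, Real.zero_rpow ht0.ne'] using this
      simpa using h3.const_mul (wh m)
    have hfin : Tendsto (fun n => ∑ m ∈ S, G n m) atTop (𝓝 0) := by
      have := tendsto_finset_sum S (fun m (_ : m ∈ S) => hGcoord m)
      simpa using this
    have hfin' : ∀ᶠ n in atTop, ∑ m ∈ S, G n m < ε/3 :=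
      hfin.eventually (gt_mem_nhds (by positivity))
    rw [eventually_atTop] at hfin'
    obtain ⟨N, hN⟩ := hfin'
    refine ⟨N, fun n hn => ?_⟩
    -- tail estimate for index n
    have hBndsum : Summable (fun m =>
        c₁⁻¹ * (δ ^ (s/t) * A (F (φ n) - p) m + δ ^ (-(s/(s-t))) * E m)) :=
      (((hdiffSummable n).mul_left (δ ^ (s/t))).add
        (hE.mul_left (δ ^ (-(s/(s-t)))))).mul_left c₁⁻¹
    have htail : (∑' m : {x : ℤ // x ∉ S}, G n ↑m) ≤ X * η + ε/3 := by
      have step1 : (∑' m : {x : ℤ // x ∉ S}, G n ↑m)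
          ≤ ∑' m : {x : ℤ // x ∉ S},
            c₁⁻¹ * (δ ^ (s/t) * A (F (φ n) - p) ↑m + δ ^ (-(s/(s-t))) * E ↑m) :=
        Summable.tsum_le_tsum (fun m => hGle n δ hδ ↑m)
          ((hGsum n).subtype _) (hBndsum.subtype _)
      have step2 : (∑' m : {x : ℤ // x ∉ S},
            c₁⁻¹ * (δ ^ (s/t) * A (F (φ n) - p) ↑m + δ ^ (-(s/(s-t))) * E ↑m))
          = (∑' m : {x : ℤ // x ∉ S}, (c₁⁻¹ * δ ^ (s/t)) * A (F (φ n) - p) ↑m)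
            + ∑' m : {x : ℤ // x ∉ S}, c₁⁻¹ * (δ ^ (-(s/(s-t))) * E ↑m) := by
        have s1 : Summable (fun m : {x : ℤ // x ∉ S} =>
            (c₁⁻¹ * δ ^ (s/t)) * A (F (φ n) - p) ↑m) :=
          ((hdiffSummable n).mul_left _).subtype _
        have s2 : Summable (fun m : {x : ℤ // x ∉ S} =>
            c₁⁻¹ * (δ ^ (-(s/(s-t))) * E ↑m)) :=
          ((hE.mul_left _).mul_left _).subtype _
        rw [← Summable.tsum_add s1 s2]
        exact tsum_congr fun m => by ring
      have step3 : (∑' m : {x : ℤ // x ∉ S}, (c₁⁻¹ * δ ^ (s/t)) * A (F (φ n) - p) ↑m)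
          ≤ X * η := by
        rw [tsum_mul_left]
        have hsub : (∑' m : {x : ℤ // x ∉ S}, A (F (φ n) - p) ↑m)
            ≤ ∑' m, A (F (φ n) - p) m :=
          Summable.tsum_le_tsum_of_inj Subtype.val Subtype.val_injective
            (fun c _ => hA0 _ c) (fun m => le_rfl)
            ((hdiffSummable n).subtype _) (hdiffSummable n)
        calc (c₁⁻¹ * δ ^ (s/t)) * ∑' m : {x : ℤ // x ∉ S}, A (F (φ n) - p) ↑m
            ≤ (c₁⁻¹ * δ ^ (s/t)) * D := by
              apply mul_le_mul_of_nonneg_left (hsub.trans (hdiffT n))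
              positivity
          _ = X * η := by rw [hXdef, hδst]; ring
      calc (∑' m : {x : ℤ // x ∉ S}, G n ↑m) ≤ _ := step1
        _ = _ := step2
        _ ≤ X * η + ε/3 := add_le_add step3 (le_of_lt hS)
    have hsplit : ∑ m ∈ S, G n m + ∑' m : {x : ℤ // x ∉ S}, G n ↑m = u n :=
      Summable.sum_add_tsum_compl (hGsum n)
    rw [Real.dist_eq, sub_zero, abs_of_nonneg (hu0 n)]
    have h1 := hN n hn
    linarith [hsplit, htail, hmain, h1]
  -- conclude
  refine ⟨φ, hφ, p, ?_, ?_⟩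
  · show Summable fun m : ℤ => wh m * (1 + |(m : ℝ)| ^ t) ^ (0:ℝ) * ‖p m‖ ^ t
    simp only [Real.rpow_zero, mul_one]
    refine Summable.of_nonneg_of_le
      (fun m => mul_nonneg (hwh m).le (Real.rpow_nonneg (norm_nonneg _) t))
      (fun m => keyG p 1 one_pos m)
      (((hApSummable.mul_left ((1:ℝ) ^ (s/t))).add
        (hE.mul_left ((1:ℝ) ^ (-(s/(s-t)))))).mul_left c₁⁻¹)
  · have heq : ∀ n, hNorm 0 t wh (F (φ n) - p) = (u n) ^ (1/t) := by
      intro n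
      simp only [hNorm, hudef, hGdef, Real.rpow_zero, mul_one, Pi.sub_apply]
    simp only [heq]
    have hcont0 : ContinuousAt (fun x : ℝ => x ^ (1/t)) 0 :=
      Real.continuousAt_rpow_const 0 (1/t) (Or.inr (by positivity))
    have htend : Tendsto (fun n => (u n) ^ (1/t)) atTop (𝓝 ((0:ℝ) ^ (1/t))) :=
      hcont0.tendsto.comp hu
    rwa [Real.zero_rpow (by positivity : (0:ℝ) < 1/t).ne'] at htend
end
end

section
/- (Pitt's property for weighted Sobolev sequence spaces) Let s > t ≥ 1 and k ∈ ℝ. Then every bounded linear operator T : h^{k,s}_{ℂ,w} → h^{k,t}_{ℂ,w} is compact. -/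
open Filter Topology

noncomputable section

open ENNReal

namespace PittAux


/-- The `r`-mass of a sequence with weight `a`, valued in `ℝ≥0∞`. -/
noncomputable def EE (a : ℤ → ℝ) (r : ℝ) (p : ℤ → ℂ) : ℝ≥0∞ :=
  ∑' m : ℤ, ENNReal.ofReal (a m * ‖p m‖ ^ r)

/-- The associated norm. -/
noncomputable def NN (a : ℤ → ℝ) (r : ℝ) (p : ℤ → ℂ) : ℝ≥0∞ := EE a r p ^ (1 / r)

variable {a b : ℤ → ℝ} {r : ℝ} {p q : ℤ → ℂ}

lemma EE_mono (ha : ∀ m, 0 ≤ a m) (hr : 0 ≤ r)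
    (h : ∀ m, ‖p m‖ ≤ ‖q m‖) : EE a r p ≤ EE a r q :=
  ENNReal.tsum_le_tsum fun m => ENNReal.ofReal_le_ofReal
    (mul_le_mul_of_nonneg_left (Real.rpow_le_rpow (norm_nonneg _) (h m) hr) (ha m))

lemma NN_mono (ha : ∀ m, 0 ≤ a m) (hr : 0 < r)
    (h : ∀ m, ‖p m‖ ≤ ‖q m‖) : NN a r p ≤ NN a r q :=
  ENNReal.rpow_le_rpow (EE_mono ha hr.le h) (by positivity)

lemma EE_smul (c : ℂ) (hc : ‖c‖ = 1) : EE a r (c • p) = EE a r p := by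
  unfold EE
  congr 1; funext m
  simp [Pi.smul_apply, smul_eq_mul, norm_mul, hc]

lemma NN_smul (c : ℂ) (hc : ‖c‖ = 1) : NN a r (c • p) = NN a r p := by
  unfold NN; rw [EE_smul c hc]

lemma EE_add_of_disjoint (hr : r ≠ 0) (h : ∀ m, p m = 0 ∨ q m = 0) :
    EE a r (p + q) = EE a r p + EE a r q := by
  unfold EE
  rw [← ENNReal.tsum_add]
  congr 1; funext m
  rcases h m with h0 | h0 <;>
    simp [Pi.add_apply, h0, Real.zero_rpow hr, map_zero]

lemma EE_coord (m : ℤ) : ENNReal.ofReal (a m * ‖p m‖ ^ r) ≤ EE a r p :=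
  ENNReal.le_tsum m

lemma EE_zero (hr : r ≠ 0) : EE a r (0 : ℤ → ℂ) = 0 := by
  unfold EE; simp [Real.zero_rpow hr]

lemma EE_indicator_finset (hr : r ≠ 0) (S : Finset ℤ) :
    EE a r (Set.indicator (↑S) p) =
      ∑ m ∈ S, ENNReal.ofReal (a m * ‖p m‖ ^ r) := by
  unfold EE
  rw [tsum_eq_sum (s := S) ?_]
  · refine Finset.sum_congr rfl fun m hm => ?_
    rw [Set.indicator_of_mem (by exact_mod_cast hm)]
  · intro m hm
    rw [Set.indicator_of_notMem (by exact_mod_cast hm)]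
    simp [Real.zero_rpow hr]

lemma EE_indicator_add_compl (hr : r ≠ 0) (S : Set ℤ) :
    EE a r (S.indicator p) + EE a r (Sᶜ.indicator p) = EE a r p := by
  have h := EE_add_of_disjoint (a := a) (hr := hr)
      (p := S.indicator p) (q := Sᶜ.indicator p) ?_
  · rw [← h, Set.indicator_self_add_compl S p]
  · intro m
    by_cases hm : m ∈ S
    · right; simp [Set.indicator_of_notMem, hm]
    · left; simp [Set.indicator_of_notMem, hm]

lemma EE_indicator_le (ha : ∀ m, 0 ≤ a m) (hr : 0 < r) (S : Set ℤ) :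
    EE a r (S.indicator p) ≤ EE a r p := by
  refine EE_mono ha hr.le fun m => ?_
  by_cases hm : m ∈ S <;> simp [Set.indicator_of_mem, Set.indicator_of_notMem, hm,
    norm_nonneg]

lemma EE_indicator_mono_set (ha : ∀ m, 0 ≤ a m) (hr : 0 < r) {S S' : Set ℤ} (h : S ⊆ S') :
    EE a r (S.indicator p) ≤ EE a r (S'.indicator p) := by
  refine EE_mono ha hr.le fun m => ?_
  by_cases hm : m ∈ S
  · rw [Set.indicator_of_mem hm, Set.indicator_of_mem (h hm)]
  · simp [Set.indicator_of_notMem, hm, norm_nonneg]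

/-- tail smallness -/
lemma EE_tail (hr : r ≠ 0) (hfin : EE a r p ≠ ⊤) {δ : ℝ≥0∞} (hδ : δ ≠ 0) :
    ∃ S : Finset ℤ, EE a r (Set.indicator (↑S)ᶜ p) < δ := by
  set f : ℤ → ℝ≥0∞ := fun m => ENNReal.ofReal (a m * ‖p m‖ ^ r) with hf
  have hlt : EE a r p < (⨆ S : Finset ℤ, ∑ m ∈ S, f m) + δ := by
    rw [← ENNReal.tsum_eq_iSup_sum]
    exact ENNReal.lt_add_right hfin hδ
  rw [ENNReal.iSup_add] at hlt
  obtain ⟨S, hS⟩ := lt_iSup_iff.mp hlt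
  refine ⟨S, ?_⟩
  have hsplit := EE_indicator_add_compl (a := a) (p := p) hr (↑S : Set ℤ)
  have hhead : EE a r (Set.indicator (↑S) p) = ∑ m ∈ S, f m := EE_indicator_finset hr S
  have hheadfin : EE a r (Set.indicator (↑S) p) ≠ ⊤ :=
    fun h => hfin (by rw [← hsplit, h, top_add])
  have hlt2 : EE a r (Set.indicator (↑S) p) + EE a r (Set.indicator (↑S)ᶜ p)
      < EE a r (Set.indicator (↑S) p) + δ := by
    rw [hsplit, hhead]; exact hS
  exact (ENNReal.add_lt_add_iff_left hheadfin).mp hlt2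





lemma term_eq (hr : 0 < r) (ha : 0 ≤ a 0) (x : ℝ) (hx : 0 ≤ x) :
    ENNReal.ofReal (a 0 * x ^ r) =
      (ENNReal.ofReal (a 0) ^ (1 / r) * ENNReal.ofReal x) ^ r := by
  rw [ENNReal.mul_rpow_of_nonneg _ _ hr.le, ← ENNReal.rpow_mul,
    one_div_mul_cancel hr.ne', ENNReal.rpow_one, ENNReal.ofReal_mul ha,
    ENNReal.ofReal_rpow_of_nonneg hx hr.le]

/-- Minkowski for `tsum` in `ℝ≥0∞`. -/
lemma lp_tsum (f g : ℤ → ℝ≥0∞) (hr : 1 ≤ r) :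
    (∑' m, (f m + g m) ^ r) ^ (1 / r) ≤
      (∑' m, f m ^ r) ^ (1 / r) + (∑' m, g m ^ r) ^ (1 / r) := by
  have hr0 : 0 < r := lt_of_lt_of_le one_pos hr
  set RHS := (∑' m, f m ^ r) ^ (1 / r) + (∑' m, g m ^ r) ^ (1 / r) with hRHS
  have key : ∀ S : Finset ℤ, ∑ m ∈ S, (f m + g m) ^ r ≤ RHS ^ r := by
    intro S
    have h1 := ENNReal.Lp_add_le S f g hr
    have h2 : (∑ i ∈ S, f i ^ r) ^ (1/r) + (∑ i ∈ S, g i ^ r) ^ (1/r) ≤ RHS :=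
      add_le_add (ENNReal.rpow_le_rpow (ENNReal.sum_le_tsum S) (by positivity))
        (ENNReal.rpow_le_rpow (ENNReal.sum_le_tsum S) (by positivity))
    calc ∑ m ∈ S, (f m + g m) ^ r
        = ((∑ m ∈ S, (f m + g m) ^ r) ^ (1/r)) ^ r := by
          rw [← ENNReal.rpow_mul, one_div_mul_cancel hr0.ne', ENNReal.rpow_one]
      _ ≤ RHS ^ r := ENNReal.rpow_le_rpow (h1.trans h2) hr0.le
  have : ∑' m, (f m + g m) ^ r ≤ RHS ^ r := by
    rw [ENNReal.tsum_eq_iSup_sum]; exact iSup_le key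
  calc (∑' m, (f m + g m) ^ r) ^ (1/r) ≤ (RHS ^ r) ^ (1/r) :=
        ENNReal.rpow_le_rpow this (by positivity)
    _ = RHS := by rw [← ENNReal.rpow_mul, mul_one_div_cancel hr0.ne', ENNReal.rpow_one]

lemma NN_add_le (hr : 1 ≤ r) (ha : ∀ m, 0 ≤ a m) :
    NN a r (p + q) ≤ NN a r p + NN a r q := by
  have hr0 : 0 < r := lt_of_lt_of_le one_pos hr
  set f : ℤ → ℝ≥0∞ := fun m => ENNReal.ofReal (a m) ^ (1/r) * ENNReal.ofReal (‖p m‖)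
  set g : ℤ → ℝ≥0∞ := fun m => ENNReal.ofReal (a m) ^ (1/r) * ENNReal.ofReal (‖q m‖)
  have hfp : EE a r p = ∑' m, f m ^ r := by
    unfold EE; congr 1; funext m
    exact term_eq (a := fun _ => a m) hr0 (ha m) _ (norm_nonneg _)
  have hgq : EE a r q = ∑' m, g m ^ r := by
    unfold EE; congr 1; funext m
    exact term_eq (a := fun _ => a m) hr0 (ha m) _ (norm_nonneg _)
  have hpq : EE a r (p + q) ≤ ∑' m, (f m + g m) ^ r := by
    refine ENNReal.tsum_le_tsum fun m => ?_
    rw [term_eq (a := fun _ => a m) hr0 (ha m) _ (norm_nonneg _)]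
    refine ENNReal.rpow_le_rpow ?_ hr0.le
    calc ENNReal.ofReal (a m) ^ (1/r) * ENNReal.ofReal (‖(p + q) m‖)
        ≤ ENNReal.ofReal (a m) ^ (1/r) *
          (ENNReal.ofReal (‖p m‖) + ENNReal.ofReal (‖q m‖)) := by
          refine mul_le_mul_right ?_ _
          rw [← ENNReal.ofReal_add (norm_nonneg _) (norm_nonneg _)]
          exact ENNReal.ofReal_le_ofReal (by simpa [Pi.add_apply] using norm_add_le (p m) (q m))
      _ = f m + g m := by rw [mul_add]
  unfold NN
  calc (EE a r (p + q)) ^ (1/r) ≤ (∑' m, (f m + g m) ^ r) ^ (1/r) :=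
        ENNReal.rpow_le_rpow hpq (by positivity)
    _ ≤ (∑' m, f m ^ r) ^ (1/r) + (∑' m, g m ^ r) ^ (1/r) := lp_tsum f g hr
    _ = (EE a r p) ^ (1/r) + (EE a r q) ^ (1/r) := by rw [hfp, hgq]

lemma EE_zero' (hr : r ≠ 0) : EE a r (0 : ℤ → ℂ) = 0 := by
  unfold EE; simp [Real.zero_rpow hr]

lemma NN_sum_le (hr : 1 ≤ r) (ha : ∀ m, 0 ≤ a m) (f : ℕ → ℤ → ℂ) (N : ℕ) :
    NN a r (∑ i ∈ Finset.range N, f i) ≤ ∑ i ∈ Finset.range N, NN a r (f i) := by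
  have hr0 : 0 < r := lt_of_lt_of_le one_pos hr
  induction N with
  | zero =>
    simp only [Finset.range_zero, Finset.sum_empty]
    unfold NN
    rw [EE_zero' hr0.ne', ENNReal.zero_rpow_of_pos (by positivity)]
  | succ n ih =>
    rw [Finset.sum_range_succ, Finset.sum_range_succ]
    exact (NN_add_le hr ha).trans (add_le_add_left ih _)

/-- additivity of mass for finitely many functions with pairwise disjoint supports -/
lemma EE_finsum_of_disjoint (hr : 0 < r) (f : ℕ → ℤ → ℂ) (D : ℕ → Set ℤ)
    (hD : Pairwise (Function.onFun Disjoint D))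
    (hsupp : ∀ i m, m ∉ D i → f i m = 0) (N : ℕ) :
    EE a r (∑ i ∈ Finset.range N, f i) = ∑ i ∈ Finset.range N, EE a r (f i) := by
  unfold EE
  rw [← Summable.tsum_finsetSum (fun i _ => ENNReal.summable)]
  congr 1; funext m
  by_cases hex : ∃ i ∈ Finset.range N, f i m ≠ 0
  · obtain ⟨i₀, hi₀, hne⟩ := hex
    have hmem : m ∈ D i₀ := by by_contra h; exact hne (hsupp i₀ m h)
    have hothers : ∀ i ∈ Finset.range N, i ≠ i₀ → f i m = 0 := by
      intro i _ hii
      refine hsupp i m fun hmi => ?_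
      exact (hD hii).le_bot ⟨hmi, hmem⟩
    have hsum : (∑ i ∈ Finset.range N, f i) m = f i₀ m := by
      rw [Finset.sum_apply]
      exact Finset.sum_eq_single_of_mem i₀ hi₀ (fun i hi hii => by rw [hothers i hi hii])
    rw [hsum]
    rw [Finset.sum_eq_single_of_mem i₀ hi₀ (fun i hi hii => by
      rw [hothers i hi hii]; simp [Real.zero_rpow hr.ne'])]
  · push_neg at hex
    have hsum : (∑ i ∈ Finset.range N, f i) m = 0 := by
      rw [Finset.sum_apply]; exact Finset.sum_eq_zero hex
    rw [hsum]
    rw [Finset.sum_eq_zero fun i hi => by rw [hex i hi]; simp [Real.zero_rpow hr.ne']]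
    simp [Real.zero_rpow hr.ne']





lemma term_nonneg (ha : ∀ m, 0 ≤ a m) (m : ℤ) : 0 ≤ a m * ‖p m‖ ^ r :=
  mul_nonneg (ha m) (Real.rpow_nonneg (norm_nonneg _) r)

lemma summable_iff_EE (ha : ∀ m, 0 ≤ a m) :
    (Summable fun m => a m * ‖p m‖ ^ r) ↔ EE a r p ≠ ⊤ := by
  constructor
  · intro h
    rw [EE, ← ENNReal.ofReal_tsum_of_nonneg (term_nonneg ha) h]
    exact ENNReal.ofReal_ne_top
  · intro h
    have := ENNReal.summable_toReal h
    refine this.congr fun m => ?_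
    rw [ENNReal.toReal_ofReal (term_nonneg ha m)]

lemma tsum_eq_toReal (ha : ∀ m, 0 ≤ a m) :
    (∑' m, a m * ‖p m‖ ^ r) = (EE a r p).toReal := by
  by_cases h : Summable fun m => a m * ‖p m‖ ^ r
  · rw [EE, ← ENNReal.ofReal_tsum_of_nonneg (term_nonneg ha) h,
      ENNReal.toReal_ofReal (tsum_nonneg (term_nonneg ha))]
  · rw [tsum_eq_zero_of_not_summable h]
    have : EE a r p = ⊤ := by
      by_contra hfin
      exact h ((summable_iff_EE ha).mpr hfin)
    rw [this, ENNReal.toReal_top]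

lemma toReal_NN : (NN a r p).toReal = (EE a r p).toReal ^ (1/r) := by
  rw [NN, ← ENNReal.toReal_rpow]

lemma NN_eq_ofReal (hr : 0 < r) (hfin : EE a r p ≠ ⊤) :
    NN a r p = ENNReal.ofReal ((EE a r p).toReal ^ (1/r)) := by
  rw [← toReal_NN, ENNReal.ofReal_toReal]
  rw [NN]
  exact ENNReal.rpow_ne_top_of_nonneg (by positivity) hfin

lemma EE_le_ofReal (hr : 0 < r) (hfin : EE a r p ≠ ⊤) {c : ℝ}
    (h : (EE a r p).toReal ^ (1/r) ≤ c) : EE a r p ≤ ENNReal.ofReal (c ^ r) := by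
  have h1 : ((EE a r p).toReal ^ (1/r)) ^ r ≤ c ^ r :=
    Real.rpow_le_rpow (by positivity) h hr.le
  rw [← Real.rpow_mul ENNReal.toReal_nonneg, one_div_mul_cancel hr.ne', Real.rpow_one] at h1
  calc EE a r p = ENNReal.ofReal (EE a r p).toReal := (ENNReal.ofReal_toReal hfin).symm
    _ ≤ ENNReal.ofReal (c ^ r) := ENNReal.ofReal_le_ofReal h1

lemma hnorm_le_of_NN_le (hr : 0 < r) {c : ℝ} (hc : 0 ≤ c)
    (h : NN a r p ≤ ENNReal.ofReal c) : (EE a r p).toReal ^ (1/r) ≤ c := by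
  rw [← toReal_NN]
  exact ENNReal.toReal_le_of_le_ofReal hc h

lemma ofReal_rpow_le_EE (hr : 0 < r) {ε : ℝ} (hε : 0 ≤ ε)
    (h : ε ≤ (EE a r p).toReal ^ (1/r)) : ENNReal.ofReal (ε ^ r) ≤ EE a r p := by
  have h1 : ε ^ r ≤ ((EE a r p).toReal ^ (1/r)) ^ r := Real.rpow_le_rpow hε h hr.le
  rw [← Real.rpow_mul ENNReal.toReal_nonneg, one_div_mul_cancel hr.ne', Real.rpow_one] at h1
  exact (ENNReal.ofReal_le_ofReal h1).trans ENNReal.ofReal_toReal_le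

lemma term_tendsto (hr : 0 ≤ r) {z : ℕ → ℂ} {l : ℂ} (hz : Tendsto z atTop (𝓝 l)) (c : ℝ) :
    Tendsto (fun i => ENNReal.ofReal (c * ‖z i‖ ^ r)) atTop
      (𝓝 (ENNReal.ofReal (c * ‖l‖ ^ r))) := by
  have h1 : Tendsto (fun i => ‖z i‖) atTop (𝓝 (‖l‖)) :=
    (continuous_norm.continuousAt).tendsto.comp hz
  have h2 : Tendsto (fun i => ‖z i‖ ^ r) atTop (𝓝 (‖l‖ ^ r)) :=
    (Real.continuousAt_rpow_const _ r (Or.inr hr)).tendsto.comp h1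
  exact (ENNReal.continuous_ofReal.continuousAt).tendsto.comp (h2.const_mul c)

/-- Fatou-type lemma. -/
lemma EE_le_of_tendsto (hr : 0 ≤ r) (u : ℕ → ℤ → ℂ) (M : ℝ≥0∞)
    (hu : ∀ m, Tendsto (fun i => u i m) atTop (𝓝 (p m)))
    (hM : ∀ i, EE a r (u i) ≤ M) : EE a r p ≤ M := by
  rw [EE, ENNReal.tsum_eq_iSup_sum]
  refine iSup_le fun S => ?_
  have htend : Tendsto (fun i => ∑ m ∈ S, ENNReal.ofReal (a m * ‖u i m‖ ^ r))
      atTop (𝓝 (∑ m ∈ S, ENNReal.ofReal (a m * ‖p m‖ ^ r))) :=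
    tendsto_finset_sum _ fun m _ => term_tendsto hr (hu m) (a m)
  refine le_of_tendsto htend (Eventually.of_forall fun i => ?_)
  exact (ENNReal.sum_le_tsum S).trans (hM i)

lemma coord_bound (hr : 0 < r) (ha : ∀ m, 0 < a m) {c : ℝ} (hc : 0 ≤ c)
    (hEE : EE a r p ≤ ENNReal.ofReal c) (m : ℤ) :
    ‖p m‖ ≤ (c / a m) ^ (1/r) := by
  have h1 : ENNReal.ofReal (a m * ‖p m‖ ^ r) ≤ ENNReal.ofReal c :=
    le_trans (ENNReal.le_tsum m) hEE
  have h2 : a m * ‖p m‖ ^ r ≤ c := by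
    have := ENNReal.ofReal_le_ofReal_iff hc |>.mp h1
    exact this
  have h3 : ‖p m‖ ^ r ≤ c / a m := by
    rw [le_div_iff₀ (ha m)]; linarith [mul_comm (a m) (‖p m‖ ^ r)]
  calc ‖p m‖
      = (‖p m‖ ^ r) ^ (1/r) := by
        rw [← Real.rpow_mul (norm_nonneg _), mul_one_div_cancel hr.ne', Real.rpow_one]
    _ ≤ (c / a m) ^ (1/r) := Real.rpow_le_rpow (by positivity) h3 (by positivity)

/-- Pointwise-bounded sequences have pointwise convergent subsequences. -/
lemma ptw (u : ℕ → ℤ → ℂ) (c : ℤ → ℝ) (hb : ∀ n m, ‖u n m‖ ≤ c m) :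
    ∃ ψ : ℕ → ℕ, StrictMono ψ ∧ ∃ g : ℤ → ℂ,
      ∀ m, Tendsto (fun i => u (ψ i) m) atTop (𝓝 (g m)) := by
  set K : Set (ℤ → ℂ) := Set.univ.pi fun m => Metric.closedBall (0 : ℂ) (c m) with hK
  have hcomp : IsCompact K := isCompact_univ_pi fun m => isCompact_closedBall _ _
  have hmem : ∀ n, u n ∈ K := by
    intro n
    rw [hK, Set.mem_univ_pi]
    intro m
    rw [Metric.mem_closedBall, Complex.dist_eq, sub_zero]
    exact hb n m
  obtain ⟨g, -, ψ, hψ, htend⟩ := hcomp.tendsto_subseq hmem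
  exact ⟨ψ, hψ, g, fun m => (tendsto_pi_nhds.mp htend) m⟩

lemma no_bound {e c ε : ℝ} (he : 0 < e) (hε : 0 < ε)
    (h : ∀ N : ℕ, 1 ≤ N → ε * (N : ℝ) ^ e ≤ c) : False := by
  have h1 : Tendsto (fun x : ℝ => x ^ e) atTop atTop := tendsto_rpow_atTop he
  have h2 : Tendsto (fun N : ℕ => ((N : ℝ)) ^ e) atTop atTop :=
    h1.comp tendsto_natCast_atTop_atTop
  have h3 : Tendsto (fun N : ℕ => ε * ((N : ℝ)) ^ e) atTop atTop :=
    h2.const_mul_atTop hε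
  obtain ⟨N, hN⟩ := (h3.eventually_gt_atTop c).and (eventually_ge_atTop 1) |>.exists
  exact absurd (h N hN.2) (not_le.mpr hN.1)


/-- Gliding-hump selection lemma. -/
lemma sel {a b : ℤ → ℝ} {r₁ r₂ : ℝ} (ha : ∀ m, 0 ≤ a m) (hb : ∀ m, 0 ≤ b m)
    (hr₁ : 0 < r₁) (hr₂ : 0 < r₂) (u v : ℕ → ℤ → ℂ)
    (hu : ∀ m, Tendsto (fun n => u n m) atTop (𝓝 0))
    (hv : ∀ m, Tendsto (fun n => v n m) atTop (𝓝 0))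
    (hmu : ∀ n, EE a r₁ (u n) ≠ ⊤) (hmv : ∀ n, EE b r₂ (v n) ≠ ⊤)
    {δ : ℝ≥0∞} (hδ : δ ≠ 0) :
    ∃ (n : ℕ → ℕ) (S R : ℕ → Finset ℤ), StrictMono n ∧
      (∀ i, S i ⊆ S (i+1)) ∧ (∀ i, R i ⊆ R (i+1)) ∧
      (∀ i, EE a r₁ (Set.indicator (↑(S i)) (u (n i))) ≤ δ) ∧
      (∀ i, EE a r₁ (Set.indicator (↑(S (i+1)) : Set ℤ)ᶜ (u (n i))) ≤ δ) ∧
      (∀ i, EE b r₂ (Set.indicator (↑(R i)) (v (n i))) ≤ δ) ∧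
      (∀ i, EE b r₂ (Set.indicator (↑(R (i+1)) : Set ℤ)ᶜ (v (n i))) ≤ δ) := by
  have hδpos : 0 < δ := pos_iff_ne_zero.mpr hδ
  have step : ∀ st : ℕ × Finset ℤ × Finset ℤ, ∃ st' : ℕ × Finset ℤ × Finset ℤ,
      st.1 < st'.1 ∧ st.2.1 ⊆ st'.2.1 ∧ st.2.2 ⊆ st'.2.2 ∧
      EE a r₁ (Set.indicator (↑st.2.1) (u st'.1)) ≤ δ ∧
      EE a r₁ (Set.indicator (↑st'.2.1 : Set ℤ)ᶜ (u st'.1)) ≤ δ ∧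
      EE b r₂ (Set.indicator (↑st.2.2) (v st'.1)) ≤ δ ∧
      EE b r₂ (Set.indicator (↑st'.2.2 : Set ℤ)ᶜ (v st'.1)) ≤ δ := by
    rintro ⟨n₀, S₀, R₀⟩
    have keyu : ∀ᶠ n in atTop, EE a r₁ (Set.indicator (↑S₀ : Set ℤ) (u n)) < δ := by
      have h := tendsto_finset_sum (f := fun m n =>
          ENNReal.ofReal (a m * ‖u n m‖ ^ r₁)) S₀
        (fun m _ => term_tendsto (z := fun n => u n m) hr₁.le (hu m) (a m))
      simp only [norm_zero, Real.zero_rpow hr₁.ne', mul_zero, ENNReal.ofReal_zero,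
        Finset.sum_const_zero] at h
      filter_upwards [h.eventually_lt_const hδpos] with n hn
      rw [EE_indicator_finset hr₁.ne' S₀]
      exact hn
    have keyv : ∀ᶠ n in atTop, EE b r₂ (Set.indicator (↑R₀ : Set ℤ) (v n)) < δ := by
      have h := tendsto_finset_sum (f := fun m n =>
          ENNReal.ofReal (b m * ‖v n m‖ ^ r₂)) R₀
        (fun m _ => term_tendsto (z := fun n => v n m) hr₂.le (hv m) (b m))
      simp only [norm_zero, Real.zero_rpow hr₂.ne', mul_zero, ENNReal.ofReal_zero,
        Finset.sum_const_zero] at h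
      filter_upwards [h.eventually_lt_const hδpos] with n hn
      rw [EE_indicator_finset hr₂.ne' R₀]
      exact hn
    obtain ⟨n₁, hn₁⟩ := ((keyu.and keyv).and (eventually_gt_atTop n₀)).exists
    obtain ⟨S₁', hS₁'⟩ := EE_tail hr₁.ne' (hmu n₁) hδ
    obtain ⟨R₁', hR₁'⟩ := EE_tail hr₂.ne' (hmv n₁) hδ
    refine ⟨(n₁, S₀ ∪ S₁', R₀ ∪ R₁'), hn₁.2, Finset.subset_union_left,
      Finset.subset_union_left, hn₁.1.1.le, ?_, hn₁.1.2.le, ?_⟩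
    · refine le_trans (le_of_le_of_eq ?_ rfl) hS₁'.le
      refine EE_indicator_mono_set ha hr₁ ?_
      rw [Finset.coe_union]
      exact Set.compl_subset_compl.mpr Set.subset_union_right
    · refine le_trans (le_of_le_of_eq ?_ rfl) hR₁'.le
      refine EE_indicator_mono_set hb hr₂ ?_
      rw [Finset.coe_union]
      exact Set.compl_subset_compl.mpr Set.subset_union_right
  choose f hf1 hf2 hf3 hf4 hf5 hf6 hf7 using step
  set init : ℕ × Finset ℤ × Finset ℤ := (0, ∅, ∅) with hinit
  set pst : ℕ → ℕ × Finset ℤ × Finset ℤ := fun i => f^[i] init with hpst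
  have hsucc : ∀ i, pst (i+1) = f (pst i) := fun i => Function.iterate_succ_apply' f i init
  refine ⟨fun i => (f (pst i)).1, fun i => (pst i).2.1, fun i => (pst i).2.2,
    ?_, ?_, ?_, fun i => hf4 (pst i), ?_, fun i => hf6 (pst i), ?_⟩
  · apply strictMono_nat_of_lt_succ
    intro i
    have : (f (pst i)).1 = (pst (i+1)).1 := by rw [hsucc]
    rw [this]
    exact hf1 (pst (i+1))
  · intro i
    show (pst i).2.1 ⊆ (pst (i+1)).2.1
    rw [hsucc]; exact hf2 (pst i)
  · intro i
    show (pst i).2.2 ⊆ (pst (i+1)).2.2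
    rw [hsucc]; exact hf3 (pst i)
  · intro i
    show EE a r₁ ((↑((pst (i+1)).2.1) : Set ℤ)ᶜ.indicator (u (f (pst i)).1)) ≤ δ
    rw [hsucc]
    exact hf5 (pst i)
  · intro i
    show EE b r₂ ((↑((pst (i+1)).2.2) : Set ℤ)ᶜ.indicator (v (f (pst i)).1)) ≤ δ
    rw [hsucc]
    exact hf7 (pst i)

section Humps

variable {a : ℤ → ℝ} {r : ℝ}

/-- The "core" of `y` relative to the annulus between `S` and `S'`. -/
private lemma decomp (y : ℤ → ℂ) (S S' : Finset ℤ) (hSS : S ⊆ S') :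
    y = Set.indicator ((↑S' : Set ℤ) \ ↑S) y +
      (Set.indicator (↑S : Set ℤ) y + Set.indicator ((↑S' : Set ℤ))ᶜ y) := by
  funext m
  by_cases h1 : m ∈ (↑S : Set ℤ)
  · have h2 : m ∈ (↑S' : Set ℤ) := by exact_mod_cast hSS (by exact_mod_cast h1)
    simp [Set.indicator_of_mem, Set.indicator_of_notMem, h1, h2, Set.mem_diff]
  · by_cases h2 : m ∈ (↑S' : Set ℤ)
    · simp [Set.indicator_of_mem, Set.indicator_of_notMem, h1, h2, Set.mem_diff]
    · simp [Set.indicator_of_mem, Set.indicator_of_notMem, h1, h2, Set.mem_diff]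

private lemma rest_mass (hr : 0 < r) (y : ℤ → ℂ) (S S' : Finset ℤ) (hSS : S ⊆ S') :
    EE a r (Set.indicator (↑S : Set ℤ) y + Set.indicator ((↑S' : Set ℤ))ᶜ y)
      = EE a r (Set.indicator (↑S : Set ℤ) y) + EE a r (Set.indicator ((↑S' : Set ℤ))ᶜ y) := by
  refine EE_add_of_disjoint hr.ne' fun m => ?_
  by_cases h1 : m ∈ (↑S : Set ℤ)
  · right
    have h2 : m ∈ (↑S' : Set ℤ) := by exact_mod_cast hSS (by exact_mod_cast h1)
    simp [Set.indicator_of_notMem, h2]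
  · left
    simp [Set.indicator_of_notMem, h1]

private lemma core_rest_mass (hr : 0 < r) (y : ℤ → ℂ) (S S' : Finset ℤ) (hSS : S ⊆ S') :
    EE a r y = EE a r (Set.indicator ((↑S' : Set ℤ) \ ↑S) y) +
      EE a r (Set.indicator (↑S : Set ℤ) y + Set.indicator ((↑S' : Set ℤ))ᶜ y) := by
  conv_lhs => rw [decomp y S S' hSS]
  refine EE_add_of_disjoint hr.ne' fun m => ?_
  by_cases hD : m ∈ (↑S' : Set ℤ) \ ↑S
  · right
    have h1 : m ∉ (↑S : Set ℤ) := hD.2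
    have h2 : m ∈ (↑S' : Set ℤ) := hD.1
    simp [Set.indicator_of_notMem, h1, h2, Pi.add_apply]
  · left
    simp [Set.indicator_of_notMem, hD]

private lemma disjoint_annuli (S : ℕ → Finset ℤ) (hS : ∀ i, S i ⊆ S (i+1)) :
    Pairwise (Function.onFun Disjoint (fun i => (↑(S (i+1)) : Set ℤ) \ ↑(S i))) := by
  have hmono : Monotone S := monotone_nat_of_le_succ hS
  have key : ∀ i j, i < j →
      Disjoint ((↑(S (i+1)) : Set ℤ) \ ↑(S i)) ((↑(S (j+1)) : Set ℤ) \ ↑(S j)) := by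
    intro i j hij
    rw [Set.disjoint_left]
    intro m hmi hmj
    have h1 : m ∈ (↑(S j) : Set ℤ) := by
      have : (S (i+1) : Finset ℤ) ⊆ S j := hmono hij
      exact_mod_cast this (by exact_mod_cast hmi.1)
    exact hmj.2 h1
  intro i j hij
  rcases hij.lt_or_gt with h | h
  · exact key i j h
  · exact (key j i h).symm

/-- Upper estimate for sums of nearly-disjoint vectors. -/
lemma upper (hr : 1 ≤ r) (ha : ∀ m, 0 ≤ a m)
    (y : ℕ → ℤ → ℂ) (c : ℕ → ℂ) (hc : ∀ i, ‖c i‖ = 1)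
    (S : ℕ → Finset ℤ) (hS : ∀ i, S i ⊆ S (i+1))
    (M δ : ℝ≥0∞) (hM : ∀ i, EE a r (y i) ≤ M)
    (h1 : ∀ i, EE a r (Set.indicator (↑(S i)) (y i)) ≤ δ)
    (h2 : ∀ i, EE a r (Set.indicator (↑(S (i+1)) : Set ℤ)ᶜ (y i)) ≤ δ)
    (N : ℕ) :
    NN a r (∑ i ∈ Finset.range N, c i • y i) ≤
      ((N : ℝ≥0∞) * M) ^ (1/r) + (N : ℝ≥0∞) * (2*δ) ^ (1/r) := by
  have hr0 : 0 < r := lt_of_lt_of_le one_pos hr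
  set D : ℕ → Set ℤ := fun i => (↑(S (i+1)) : Set ℤ) \ ↑(S i) with hD
  set core : ℕ → ℤ → ℂ := fun i => (D i).indicator (y i) with hcore
  set rest : ℕ → ℤ → ℂ := fun i =>
    Set.indicator (↑(S i) : Set ℤ) (y i) + Set.indicator ((↑(S (i+1)) : Set ℤ))ᶜ (y i) with hrest
  have hsplit : ∀ i, y i = core i + rest i := fun i => decomp (y i) (S i) (S (i+1)) (hS i)
  have hrestE : ∀ i, EE a r (rest i) ≤ 2*δ := by
    intro i
    rw [hrest]
    rw [rest_mass hr0 (y i) (S i) (S (i+1)) (hS i)]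
    calc EE a r (Set.indicator (↑(S i) : Set ℤ) (y i)) +
          EE a r (Set.indicator ((↑(S (i+1)) : Set ℤ))ᶜ (y i)) ≤ δ + δ :=
        add_le_add (h1 i) (h2 i)
      _ = 2*δ := (two_mul δ).symm
  have hdecomp : ∑ i ∈ Finset.range N, c i • y i =
      (∑ i ∈ Finset.range N, c i • core i) + ∑ i ∈ Finset.range N, c i • rest i := by
    rw [← Finset.sum_add_distrib]
    refine Finset.sum_congr rfl fun i _ => ?_
    rw [← smul_add, ← hsplit i]
  have hcoreE : EE a r (∑ i ∈ Finset.range N, c i • core i) ≤ (N : ℝ≥0∞) * M := by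
    rw [EE_finsum_of_disjoint hr0 _ D (disjoint_annuli S hS)
      (fun i m hm => by rw [hcore]; simp [Set.indicator_of_notMem hm]) N]
    calc ∑ i ∈ Finset.range N, EE a r (c i • core i)
        ≤ ∑ _i ∈ Finset.range N, M := by
          refine Finset.sum_le_sum fun i _ => ?_
          rw [EE_smul (c i) (hc i)]
          exact le_trans (EE_indicator_le ha hr0 (D i)) (hM i)
      _ = (N : ℝ≥0∞) * M := by rw [Finset.sum_const, Finset.card_range, nsmul_eq_mul]
  have hrestN : NN a r (∑ i ∈ Finset.range N, c i • rest i) ≤ (N : ℝ≥0∞) * (2*δ) ^ (1/r) := by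
    calc NN a r (∑ i ∈ Finset.range N, c i • rest i)
        ≤ ∑ i ∈ Finset.range N, NN a r (c i • rest i) := NN_sum_le hr ha _ N
      _ ≤ ∑ _i ∈ Finset.range N, (2*δ) ^ (1/r) := by
          refine Finset.sum_le_sum fun i _ => ?_
          rw [NN_smul (c i) (hc i), NN]
          exact ENNReal.rpow_le_rpow (hrestE i) (by positivity)
      _ = (N : ℝ≥0∞) * (2*δ) ^ (1/r) := by
          rw [Finset.sum_const, Finset.card_range, nsmul_eq_mul]
  calc NN a r (∑ i ∈ Finset.range N, c i • y i)
      = NN a r ((∑ i ∈ Finset.range N, c i • core i) + ∑ i ∈ Finset.range N, c i • rest i) := by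
        rw [← hdecomp]
    _ ≤ NN a r (∑ i ∈ Finset.range N, c i • core i) +
        NN a r (∑ i ∈ Finset.range N, c i • rest i) := NN_add_le hr ha
    _ ≤ ((N : ℝ≥0∞) * M) ^ (1/r) + (N : ℝ≥0∞) * (2*δ) ^ (1/r) := by
        refine add_le_add ?_ hrestN
        exact ENNReal.rpow_le_rpow hcoreE (by positivity)

/-- Lower estimate for sums of nearly-disjoint vectors with mass bounded below. -/
lemma lower (hr : 1 ≤ r) (ha : ∀ m, 0 ≤ a m)
    (z : ℕ → ℤ → ℂ) (R : ℕ → Finset ℤ) (hR : ∀ i, R i ⊆ R (i+1))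
    (ε δ : ℝ≥0∞) (hε : ∀ i, ε ≤ EE a r (z i))
    (h1 : ∀ i, EE a r (Set.indicator (↑(R i)) (z i)) ≤ δ)
    (h2 : ∀ i, EE a r (Set.indicator (↑(R (i+1)) : Set ℤ)ᶜ (z i)) ≤ δ)
    (N : ℕ) :
    ((N : ℝ≥0∞) * (ε - 2*δ)) ^ (1/r) ≤
      NN a r (∑ i ∈ Finset.range N, z i) + (N : ℝ≥0∞) * (2*δ) ^ (1/r) := by
  have hr0 : 0 < r := lt_of_lt_of_le one_pos hr
  set D : ℕ → Set ℤ := fun i => (↑(R (i+1)) : Set ℤ) \ ↑(R i) with hD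
  set core : ℕ → ℤ → ℂ := fun i => (D i).indicator (z i) with hcore
  set rest : ℕ → ℤ → ℂ := fun i =>
    Set.indicator (↑(R i) : Set ℤ) (z i) + Set.indicator ((↑(R (i+1)) : Set ℤ))ᶜ (z i) with hrest
  have hsplit : ∀ i, z i = core i + rest i := fun i => decomp (z i) (R i) (R (i+1)) (hR i)
  have hrestE : ∀ i, EE a r (rest i) ≤ 2*δ := by
    intro i
    rw [hrest, rest_mass hr0 (z i) (R i) (R (i+1)) (hR i)]
    calc EE a r (Set.indicator (↑(R i) : Set ℤ) (z i)) +
          EE a r (Set.indicator ((↑(R (i+1)) : Set ℤ))ᶜ (z i)) ≤ δ + δ :=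
        add_le_add (h1 i) (h2 i)
      _ = 2*δ := (two_mul δ).symm
  have hcoreLB : ∀ i, ε - 2*δ ≤ EE a r (core i) := by
    intro i
    rw [tsub_le_iff_right]
    calc ε ≤ EE a r (z i) := hε i
      _ = EE a r (core i) + EE a r (rest i) :=
        core_rest_mass hr0 (z i) (R i) (R (i+1)) (hR i)
      _ ≤ EE a r (core i) + 2*δ := add_le_add_right (hrestE i) _
  have hsumcore : ((N : ℝ≥0∞) * (ε - 2*δ)) ≤ EE a r (∑ i ∈ Finset.range N, core i) := by
    rw [EE_finsum_of_disjoint hr0 _ D (disjoint_annuli R hR)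
      (fun i m hm => by rw [hcore]; simp [Set.indicator_of_notMem hm]) N]
    calc (N : ℝ≥0∞) * (ε - 2*δ) = ∑ _i ∈ Finset.range N, (ε - 2*δ) := by
          rw [Finset.sum_const, Finset.card_range, nsmul_eq_mul]
      _ ≤ ∑ i ∈ Finset.range N, EE a r (core i) :=
          Finset.sum_le_sum fun i _ => hcoreLB i
  have hNNcore : ((N : ℝ≥0∞) * (ε - 2*δ)) ^ (1/r) ≤ NN a r (∑ i ∈ Finset.range N, core i) :=
    ENNReal.rpow_le_rpow hsumcore (by positivity)
  have hcore_as : (∑ i ∈ Finset.range N, core i) =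
      (∑ i ∈ Finset.range N, z i) + ∑ i ∈ Finset.range N, (-1 : ℂ) • rest i := by
    rw [← Finset.sum_add_distrib]
    refine Finset.sum_congr rfl fun i _ => ?_
    funext m
    have h := congrFun (hsplit i) m
    simp only [Pi.add_apply, Pi.smul_apply, smul_eq_mul, neg_one_mul] at h ⊢
    rw [h]; ring
  have habs : ‖(-1 : ℂ)‖ = 1 := by simp
  calc ((N : ℝ≥0∞) * (ε - 2*δ)) ^ (1/r) ≤ NN a r (∑ i ∈ Finset.range N, core i) := hNNcore
    _ = NN a r ((∑ i ∈ Finset.range N, z i) + ∑ i ∈ Finset.range N, (-1 : ℂ) • rest i) := by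
        rw [hcore_as]
    _ ≤ NN a r (∑ i ∈ Finset.range N, z i) +
        NN a r (∑ i ∈ Finset.range N, (-1 : ℂ) • rest i) := NN_add_le hr ha
    _ ≤ NN a r (∑ i ∈ Finset.range N, z i) + (N : ℝ≥0∞) * (2*δ) ^ (1/r) := by
        refine add_le_add_right ?_ _
        calc NN a r (∑ i ∈ Finset.range N, (-1 : ℂ) • rest i)
            ≤ ∑ i ∈ Finset.range N, NN a r ((-1 : ℂ) • rest i) := NN_sum_le hr ha _ N
          _ ≤ ∑ _i ∈ Finset.range N, (2*δ) ^ (1/r) := by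
              refine Finset.sum_le_sum fun i _ => ?_
              rw [NN_smul (-1 : ℂ) habs, NN]
              exact ENNReal.rpow_le_rpow (hrestE i) (by positivity)
          _ = (N : ℝ≥0∞) * (2*δ) ^ (1/r) := by
              rw [Finset.sum_const, Finset.card_range, nsmul_eq_mul]

end Humps

section Arith

lemma one_div_le_one (r : ℝ) (hr : 1 ≤ r) : 1/r ≤ 1 := by
  rw [div_le_one (by linarith)]; linarith

lemma rpow_cancel {x r : ℝ} (hx : 0 ≤ x) (hr : r ≠ 0) : (x ^ r) ^ (1/r) = x := by
  rw [← Real.rpow_mul hx, mul_one_div_cancel hr, Real.rpow_one]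

lemma NM_eq (r : ℝ) (hr : 0 < r) (N : ℕ) (M₁ : ℝ) (hM₁ : 0 ≤ M₁) :
    ((N : ℝ≥0∞) * ENNReal.ofReal (M₁ ^ r)) ^ (1/r) =
      ENNReal.ofReal ((N : ℝ) ^ (1/r) * M₁) := by
  rw [← ENNReal.ofReal_natCast, ← ENNReal.ofReal_mul (Nat.cast_nonneg N),
    ENNReal.ofReal_rpow_of_nonneg (by positivity) (by positivity),
    Real.mul_rpow (Nat.cast_nonneg N) (by positivity), rpow_cancel hM₁ hr.ne']

lemma Nd_le (r : ℝ) (hr : 1 ≤ r) (N : ℕ) (hN : 1 ≤ N) {d : ℝ} (hd : 0 < d)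
    (hdN : d ≤ (1/(N:ℝ)) ^ r) :
    (N : ℝ≥0∞) * (2 * ENNReal.ofReal d) ^ (1/r) ≤ ENNReal.ofReal 2 := by
  have hr0 : 0 < r := lt_of_lt_of_le one_pos hr
  have hNpos : (0:ℝ) < N := by exact_mod_cast hN
  have h2d : (2 : ℝ≥0∞) * ENNReal.ofReal d = ENNReal.ofReal (2*d) := by
    rw [ENNReal.ofReal_mul (by norm_num : (0:ℝ) ≤ 2), ENNReal.ofReal_ofNat]
  rw [h2d, ENNReal.ofReal_rpow_of_nonneg (by positivity) (by positivity),
    ← ENNReal.ofReal_natCast, ← ENNReal.ofReal_mul (Nat.cast_nonneg N)]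
  refine ENNReal.ofReal_le_ofReal ?_
  have key : (2*d) ^ (1/r) ≤ 2 * (1/(N:ℝ)) := by
    calc (2*d) ^ (1/r) ≤ (2 * (1/(N:ℝ)) ^ r) ^ (1/r) :=
          Real.rpow_le_rpow (by positivity) (by linarith) (by positivity)
      _ = 2 ^ (1/r) * (1/(N:ℝ)) := by
          rw [Real.mul_rpow (by norm_num) (by positivity), rpow_cancel (by positivity) hr0.ne']
      _ ≤ 2 * (1/(N:ℝ)) := by
          have h21 : (2:ℝ) ^ (1/r) ≤ 2 ^ (1:ℝ) :=
            Real.rpow_le_rpow_of_exponent_le (by norm_num) (one_div_le_one r hr)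
          rw [Real.rpow_one] at h21
          exact mul_le_mul_of_nonneg_right h21 (by positivity)
  calc (N:ℝ) * (2*d) ^ (1/r) ≤ (N:ℝ) * (2 * (1/(N:ℝ))) :=
        mul_le_mul_of_nonneg_left key (by positivity)
    _ = 2 := by field_simp
end Arith

lemma oc (N : ℕ) {x r : ℝ} (hx : 0 ≤ x) (hr : 0 ≤ r) :
    ((N : ℝ≥0∞) * ENNReal.ofReal x) ^ r = ENNReal.ofReal (((N:ℝ) * x) ^ r) := by
  rw [← ENNReal.ofReal_natCast, ← ENNReal.ofReal_mul (Nat.cast_nonneg N),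
    ENNReal.ofReal_rpow_of_nonneg (by positivity) hr]

lemma lower_real (r : ℝ) (hr : 0 < r) (N : ℕ) (ε : ℝ) (hε : 0 < ε)
    {d : ℝ} (hd : 0 ≤ d) (hdε : d ≤ ε ^ r / 4) :
    ENNReal.ofReal ((ε^r/2) ^ (1/r) * (N:ℝ) ^ (1/r)) ≤
      ((N : ℝ≥0∞) * (ENNReal.ofReal (ε ^ r) - 2 * ENNReal.ofReal d)) ^ (1/r) := by
  have hεr : (0:ℝ) ≤ ε ^ r := by positivity
  have h1 : ENNReal.ofReal (ε^r/2) ≤ ENNReal.ofReal (ε^r) - 2 * ENNReal.ofReal d := by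
    rw [show (2:ℝ≥0∞) * ENNReal.ofReal d = ENNReal.ofReal (2*d) by
        rw [ENNReal.ofReal_mul (by norm_num : (0:ℝ) ≤ 2), ENNReal.ofReal_ofNat],
      ← ENNReal.ofReal_sub _ (by linarith)]
    exact ENNReal.ofReal_le_ofReal (by linarith)
  calc ENNReal.ofReal ((ε^r/2)^(1/r) * (N:ℝ)^(1/r))
      = ((N:ℝ≥0∞) * ENNReal.ofReal (ε^r/2)) ^ (1/r) := by
        rw [oc N (by positivity) (by positivity),
          Real.mul_rpow (Nat.cast_nonneg N) (by positivity), mul_comm]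
    _ ≤ ((N : ℝ≥0∞) * (ENNReal.ofReal (ε ^ r) - 2 * ENNReal.ofReal d)) ^ (1/r) :=
        ENNReal.rpow_le_rpow (mul_le_mul_right h1 _) (by positivity)

/-- Case A of the main argument: the pointwise limit of `TK` vanishes. -/
lemma caseA {A B : ℤ → ℝ} {s t : ℝ}
    (hAnn : ∀ m, 0 ≤ A m) (hBnn : ∀ m, 0 ≤ B m)
    (hs : 1 ≤ s) (ht : 1 ≤ t) (hts : t < s)
    (K TK : ℕ → ℤ → ℂ) (M₁ C' ε : ℝ) (hM₁ : 0 ≤ M₁) (hC' : 0 ≤ C') (hε : 0 < ε)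
    (hKE : ∀ i, EE A s (K i) ≤ ENNReal.ofReal (M₁ ^ s))
    (hTKfin : ∀ i, EE B t (TK i) ≠ ⊤)
    (hKptw : ∀ m, Tendsto (fun i => K i m) atTop (𝓝 0))
    (hTKptw : ∀ m, Tendsto (fun i => TK i m) atTop (𝓝 0))
    (hTKeps : ∀ i, ENNReal.ofReal (ε ^ t) ≤ EE B t (TK i))
    (hop : ∀ (n : ℕ → ℕ) (N : ℕ),
      NN B t (∑ i ∈ Finset.range N, TK (n i)) ≤
        ENNReal.ofReal C' * NN A s (∑ i ∈ Finset.range N, K (n i))) :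
    False := by
  have hs0 : 0 < s := lt_of_lt_of_le one_pos hs
  have ht0 : 0 < t := lt_of_lt_of_le one_pos ht
  have hKfin : ∀ i, EE A s (K i) ≠ ⊤ :=
    fun i => ne_top_of_le_ne_top ENNReal.ofReal_ne_top (hKE i)
  have he₂pos : 0 < (ε^t/2) ^ (1/t) := by positivity
  refine no_bound (e := 1/t - 1/s) (c := C' * M₁ + 2*C' + 2) (ε := (ε^t/2) ^ (1/t))
    (by rw [sub_pos]; exact one_div_lt_one_div_of_lt ht0 hts) he₂pos ?_
  intro N hN
  have hNpos : (0:ℝ) < N := by exact_mod_cast hN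
  set d : ℝ := min (ε^t/4) (min ((1/(N:ℝ))^t) ((1/(N:ℝ))^s)) with hdd
  have hdpos : 0 < d :=
    lt_min (by positivity) (lt_min (by positivity) (by positivity))
  obtain ⟨n, S, R, hmono, hSchain, hRchain, hu1, hu2, hv1, hv2⟩ :=
    sel hAnn hBnn hs0 ht0 K TK hKptw hTKptw hKfin hTKfin
      (δ := ENNReal.ofReal d) (by simp [ENNReal.ofReal_eq_zero, not_le, hdpos])
  have hupper := upper hs hAnn (fun i => K (n i)) (fun _ => 1) (fun i => by simp)
      S hSchain (ENNReal.ofReal (M₁ ^ s)) (ENNReal.ofReal d) (fun i => hKE (n i)) hu1 hu2 N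
  simp only [one_smul] at hupper
  have hlower := lower ht hBnn (fun i => TK (n i)) R hRchain
      (ENNReal.ofReal (ε ^ t)) (ENNReal.ofReal d) (fun i => hTKeps (n i)) hv1 hv2 N
  have hcomb : ((N : ℝ≥0∞) * (ENNReal.ofReal (ε^t) - 2 * ENNReal.ofReal d)) ^ (1/t)
      ≤ ENNReal.ofReal C' * (((N:ℝ≥0∞) * ENNReal.ofReal (M₁^s)) ^ (1/s)
          + (N:ℝ≥0∞) * (2 * ENNReal.ofReal d) ^ (1/s))
        + (N:ℝ≥0∞) * (2 * ENNReal.ofReal d) ^ (1/t) :=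
    hlower.trans (add_le_add_left ((hop n N).trans (mul_le_mul_right hupper _)) _)
  have hup2 : ((N:ℝ≥0∞) * ENNReal.ofReal (M₁^s)) ^ (1/s)
      + (N:ℝ≥0∞) * (2 * ENNReal.ofReal d) ^ (1/s)
      ≤ ENNReal.ofReal ((N:ℝ) ^ (1/s) * M₁ + 2) := by
    rw [ENNReal.ofReal_add (by positivity) (by norm_num)]
    exact add_le_add (le_of_eq (NM_eq s hs0 N M₁ hM₁))
      (Nd_le s hs N hN hdpos ((min_le_right _ _).trans (min_le_right _ _)))
  have hRHS : ENNReal.ofReal C' * (((N:ℝ≥0∞) * ENNReal.ofReal (M₁^s)) ^ (1/s)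
          + (N:ℝ≥0∞) * (2 * ENNReal.ofReal d) ^ (1/s))
        + (N:ℝ≥0∞) * (2 * ENNReal.ofReal d) ^ (1/t)
      ≤ ENNReal.ofReal (C' * ((N:ℝ) ^ (1/s) * M₁ + 2) + 2) := by
    rw [ENNReal.ofReal_add (by positivity) (by norm_num),
      ENNReal.ofReal_mul hC']
    exact add_le_add (mul_le_mul_right hup2 _)
      (Nd_le t ht N hN hdpos ((min_le_right _ _).trans (min_le_left _ _)))
  have hLHS := lower_real t ht0 N ε hε hdpos.le (min_le_left _ _)
  have hreal : (ε^t/2) ^ (1/t) * (N:ℝ) ^ (1/t) ≤ C' * ((N:ℝ) ^ (1/s) * M₁ + 2) + 2 := by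
    rw [← ENNReal.ofReal_le_ofReal_iff (by positivity)]
    exact hLHS.trans (hcomb.trans hRHS)
  have hNs1 : (1:ℝ) ≤ (N:ℝ) ^ (1/s) := by
    have hN1 : (1:ℝ) ≤ (N:ℝ) := by exact_mod_cast hN
    calc (1:ℝ) = (1:ℝ) ^ (1/s) := (Real.one_rpow _).symm
      _ ≤ (N:ℝ) ^ (1/s) := Real.rpow_le_rpow (by norm_num) hN1 (by positivity)
  have hsplit : (N:ℝ) ^ (1/t) = (N:ℝ) ^ (1/t - 1/s) * (N:ℝ) ^ (1/s) := by
    rw [← Real.rpow_add hNpos]; ring_nf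
  have hfinal : (ε^t/2) ^ (1/t) * ((N:ℝ) ^ (1/t - 1/s) * (N:ℝ) ^ (1/s))
      ≤ (C' * M₁ + 2*C' + 2) * (N:ℝ) ^ (1/s) := by
    rw [← hsplit]
    refine hreal.trans ?_
    nlinarith [hNs1, hC', hM₁, Real.rpow_nonneg (Nat.cast_nonneg N) (1/s)]
  have hNspos : (0:ℝ) < (N:ℝ) ^ (1/s) := by positivity
  have := le_of_mul_le_mul_right (by
    calc (ε^t/2) ^ (1/t) * (N:ℝ) ^ (1/t - 1/s) * (N:ℝ) ^ (1/s)
        = (ε^t/2) ^ (1/t) * ((N:ℝ) ^ (1/t - 1/s) * (N:ℝ) ^ (1/s)) := by ring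
      _ ≤ (C' * M₁ + 2*C' + 2) * (N:ℝ) ^ (1/s) := hfinal) hNspos
  exact this

/-- Case B: some coordinate of the pointwise limit of `TK` is nonzero. -/
lemma caseB {A B : ℤ → ℝ} {s t : ℝ}
    (hAnn : ∀ m, 0 ≤ A m) (hs1 : 1 < s) (ht : 1 ≤ t)
    (K TK : ℕ → ℤ → ℂ) (M₁ C' : ℝ) (hM₁ : 0 ≤ M₁) (hC' : 0 ≤ C')
    (hKE : ∀ i, EE A s (K i) ≤ ENNReal.ofReal (M₁ ^ s))
    (hKptw : ∀ m, Tendsto (fun i => K i m) atTop (𝓝 0))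
    (m₀ : ℤ) (c₀ : ℝ) (hc₀ : 0 < c₀) (hB₀ : 0 < B m₀)
    (hz : ∀ i, c₀ ≤ ‖TK i m₀‖)
    (hop : ∀ (n : ℕ → ℕ) (θ : ℕ → ℂ), (∀ i, ‖θ i‖ = 1) → ∀ N : ℕ,
      ENNReal.ofReal (B m₀ * ‖(∑ i ∈ Finset.range N, θ i • TK (n i)) m₀‖ ^ t) ≤
        (ENNReal.ofReal C' * NN A s (∑ i ∈ Finset.range N, θ i • K (n i))) ^ t) :
    False := by
  have hs0 : 0 < s := lt_trans one_pos hs1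
  have hs : 1 ≤ s := hs1.le
  have ht0 : 0 < t := lt_of_lt_of_le one_pos ht
  have hKfin : ∀ i, EE A s (K i) ≠ ⊤ :=
    fun i => ne_top_of_le_ne_top ENNReal.ofReal_ne_top (hKE i)
  have hβ : (0:ℝ) < (B m₀) ^ (1/t) := by positivity
  refine no_bound (e := 1 - 1/s) (c := C' * M₁ + 2*C') (ε := (B m₀) ^ (1/t) * c₀)
    (by rw [sub_pos]; rw [div_lt_one hs0]; exact hs1) (by positivity) ?_
  intro N hN
  have hNpos : (0:ℝ) < N := by exact_mod_cast hN
  set d : ℝ := (1/(N:ℝ))^s with hdd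
  have hdpos : 0 < d := by positivity
  obtain ⟨n, S, R, hmono, hSchain, hRchain, hu1, hu2, -, -⟩ :=
    sel hAnn hAnn hs0 hs0 K (fun _ _ => 0) hKptw (fun m => tendsto_const_nhds)
      hKfin (fun i => by
        show EE A s (0 : ℤ → ℂ) ≠ ⊤
        rw [EE_zero hs0.ne']
        exact ENNReal.zero_ne_top)
      (δ := ENNReal.ofReal d) (by simp [ENNReal.ofReal_eq_zero, not_le, hdpos])
  set θ : ℕ → ℂ := fun i => (‖TK (n i) m₀‖ : ℂ) / TK (n i) m₀ with hθdef
  have hzne : ∀ i, TK (n i) m₀ ≠ 0 := by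
    intro i h
    have := hz (n i)
    rw [h, norm_zero] at this
    linarith
  have hθ : ∀ i, ‖θ i‖ = 1 := by
    intro i
    rw [hθdef]
    simp only [norm_div, Complex.norm_real, norm_norm]
    exact div_self (fun h => hzne i (by rwa [norm_eq_zero] at h))
  have hupper := upper hs hAnn (fun i => K (n i)) θ hθ
      S hSchain (ENNReal.ofReal (M₁ ^ s)) (ENNReal.ofReal d) (fun i => hKE (n i)) hu1 hu2 N
  have hup2 : NN A s (∑ i ∈ Finset.range N, θ i • K (n i))
      ≤ ENNReal.ofReal ((N:ℝ) ^ (1/s) * M₁ + 2) := by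
    refine hupper.trans ?_
    rw [ENNReal.ofReal_add (by positivity) (by norm_num)]
    exact add_le_add (le_of_eq (NM_eq s hs0 N M₁ hM₁)) (Nd_le s hs N hN hdpos le_rfl)
  -- coordinate computation
  have hcoord : (∑ i ∈ Finset.range N, θ i • TK (n i)) m₀ =
      ((∑ i ∈ Finset.range N, ‖TK (n i) m₀‖ : ℝ) : ℂ) := by
    rw [Finset.sum_apply]
    push_cast
    refine Finset.sum_congr rfl fun i _ => ?_
    rw [Pi.smul_apply, smul_eq_mul, hθdef]
    rw [div_mul_cancel₀ _ (hzne i)]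
  have habs : (N:ℝ) * c₀ ≤ ‖(∑ i ∈ Finset.range N, θ i • TK (n i)) m₀‖ := by
    rw [hcoord, Complex.norm_real,
      Real.norm_of_nonneg (Finset.sum_nonneg fun i _ => norm_nonneg _)]
    calc (N:ℝ) * c₀ = (Finset.range N).card • c₀ := by
          rw [Finset.card_range, nsmul_eq_mul]
      _ ≤ ∑ i ∈ Finset.range N, ‖TK (n i) m₀‖ :=
          Finset.card_nsmul_le_sum _ _ _ fun i _ => hz (n i)
  have hkey : ENNReal.ofReal (B m₀ * ((N:ℝ) * c₀) ^ t)
      ≤ ENNReal.ofReal ((C' * ((N:ℝ) ^ (1/s) * M₁ + 2)) ^ t) := by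
    calc ENNReal.ofReal (B m₀ * ((N:ℝ) * c₀) ^ t)
        ≤ ENNReal.ofReal (B m₀ *
            ‖(∑ i ∈ Finset.range N, θ i • TK (n i)) m₀‖ ^ t) := by
          refine ENNReal.ofReal_le_ofReal (mul_le_mul_of_nonneg_left ?_ hB₀.le)
          exact Real.rpow_le_rpow (by positivity) habs ht0.le
      _ ≤ (ENNReal.ofReal C' * NN A s (∑ i ∈ Finset.range N, θ i • K (n i))) ^ t :=
          hop n θ hθ N
      _ ≤ (ENNReal.ofReal C' * ENNReal.ofReal ((N:ℝ) ^ (1/s) * M₁ + 2)) ^ t :=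
          ENNReal.rpow_le_rpow (mul_le_mul_right hup2 _) ht0.le
      _ = ENNReal.ofReal ((C' * ((N:ℝ) ^ (1/s) * M₁ + 2)) ^ t) := by
          rw [← ENNReal.ofReal_mul hC', ENNReal.ofReal_rpow_of_nonneg (by positivity) ht0.le]
  have hrealt : B m₀ * ((N:ℝ) * c₀) ^ t ≤ (C' * ((N:ℝ) ^ (1/s) * M₁ + 2)) ^ t :=
    (ENNReal.ofReal_le_ofReal_iff (by positivity)).mp hkey
  have hreal : (B m₀) ^ (1/t) * ((N:ℝ) * c₀) ≤ C' * ((N:ℝ) ^ (1/s) * M₁ + 2) := by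
    have h1 : (B m₀ * ((N:ℝ) * c₀) ^ t) ^ (1/t) ≤ ((C' * ((N:ℝ) ^ (1/s) * M₁ + 2)) ^ t) ^ (1/t) :=
      Real.rpow_le_rpow (by positivity) hrealt (by positivity)
    rwa [Real.mul_rpow hB₀.le (by positivity), rpow_cancel (by positivity) ht0.ne',
      rpow_cancel (by positivity) ht0.ne'] at h1
  have hNs1 : (1:ℝ) ≤ (N:ℝ) ^ (1/s) := by
    have hN1 : (1:ℝ) ≤ (N:ℝ) := by exact_mod_cast hN
    calc (1:ℝ) = (1:ℝ) ^ (1/s) := (Real.one_rpow _).symm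
      _ ≤ (N:ℝ) ^ (1/s) := Real.rpow_le_rpow (by norm_num) hN1 (by positivity)
  have hsplit : (N:ℝ) = (N:ℝ) ^ (1 - 1/s) * (N:ℝ) ^ (1/s) := by
    rw [← Real.rpow_add hNpos]; ring_nf; rw [Real.rpow_one]
  have hNspos : (0:ℝ) < (N:ℝ) ^ (1/s) := by positivity
  refine le_of_mul_le_mul_right ?_ hNspos
  calc (B m₀) ^ (1/t) * c₀ * (N:ℝ) ^ (1 - 1/s) * (N:ℝ) ^ (1/s)
      = (B m₀) ^ (1/t) * (((N:ℝ) ^ (1 - 1/s) * (N:ℝ) ^ (1/s)) * c₀) := by ring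
    _ = (B m₀) ^ (1/t) * ((N:ℝ) * c₀) := by rw [← hsplit]
    _ ≤ C' * ((N:ℝ) ^ (1/s) * M₁ + 2) := hreal
    _ ≤ (C' * M₁ + 2*C') * (N:ℝ) ^ (1/s) := by nlinarith [hNs1, hC', hM₁]

section Bridge

def wt (k r : ℝ) (w : ℤ → ℝ) (m : ℤ) : ℝ := w m * (1 + |(m : ℝ)| ^ r) ^ k

lemma wt_pos {k r : ℝ} {w : ℤ → ℝ} (hw : ∀ m, 0 < w m) (m : ℤ) : 0 < wt k r w m :=
  mul_pos (hw m) (Real.rpow_pos_of_pos (by positivity) k)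

variable {k r : ℝ} {w : ℤ → ℝ} {p q : ℤ → ℂ}

lemma hMem_iff (hw : ∀ m, 0 < w m) :
    hMem k r w p ↔ EE (wt k r w) r p ≠ ⊤ :=
  summable_iff_EE (fun m => (wt_pos hw m).le)

lemma hNorm_eq (hw : ∀ m, 0 < w m) (p : ℤ → ℂ) :
    hNorm k r w p = (EE (wt k r w) r p).toReal ^ (1/r) := by
  rw [show hNorm k r w p = (∑' m, wt k r w m * ‖p m‖ ^ r) ^ (1/r) from rfl,
    tsum_eq_toReal (fun m => (wt_pos hw m).le)]

lemma EE_smul_gen (c : ℂ) {a : ℤ → ℝ} (hann : ∀ m, 0 ≤ a m) :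
    EE a r (c • p) = ENNReal.ofReal (‖c‖ ^ r) * EE a r p := by
  rw [EE, EE, ← ENNReal.tsum_mul_left]
  congr 1; funext m
  rw [← ENNReal.ofReal_mul (by positivity)]
  congr 1
  rw [Pi.smul_apply, smul_eq_mul, norm_mul,
    Real.mul_rpow (norm_nonneg _) (norm_nonneg _)]
  ring

lemma hMem_zero (hw : ∀ m, 0 < w m) (hr : 0 < r) : hMem k r w (0 : ℤ → ℂ) := by
  rw [hMem_iff hw, EE_zero hr.ne']; exact ENNReal.zero_ne_top

lemma hMem_smul (hw : ∀ m, 0 < w m) (hr : 0 < r) (c : ℂ) (h : hMem k r w p) :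
    hMem k r w (c • p) := by
  rw [hMem_iff hw] at h ⊢
  rw [EE_smul_gen c (fun m => (wt_pos hw m).le)]
  exact ENNReal.mul_ne_top ENNReal.ofReal_ne_top h

lemma EE_eq_NN_rpow (hr : 0 < r) (a : ℤ → ℝ) (p : ℤ → ℂ) :
    EE a r p = (NN a r p) ^ r := by
  rw [NN, ← ENNReal.rpow_mul, one_div_mul_cancel hr.ne', ENNReal.rpow_one]

lemma NN_ne_top {a : ℤ → ℝ} (hr : 0 < r) (h : EE a r p ≠ ⊤) : NN a r p ≠ ⊤ :=
  ENNReal.rpow_ne_top_of_nonneg (by positivity) h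

lemma hMem_add (hw : ∀ m, 0 < w m) (hr : 1 ≤ r) (hp : hMem k r w p) (hq : hMem k r w q) :
    hMem k r w (p + q) := by
  have hr0 : 0 < r := lt_of_lt_of_le one_pos hr
  rw [hMem_iff hw] at hp hq ⊢
  have h1 := NN_add_le (a := wt k r w) (p := p) (q := q) hr (fun m => (wt_pos hw m).le)
  have h2 : NN (wt k r w) r (p+q) ≠ ⊤ :=
    ne_top_of_le_ne_top (ENNReal.add_ne_top.mpr ⟨NN_ne_top hr0 hp, NN_ne_top hr0 hq⟩) h1
  rw [EE_eq_NN_rpow hr0]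
  exact ENNReal.rpow_ne_top_of_nonneg hr0.le h2

lemma hMem_sub (hw : ∀ m, 0 < w m) (hr : 1 ≤ r) (hp : hMem k r w p) (hq : hMem k r w q) :
    hMem k r w (p - q) := by
  have h : p - q = p + (-1:ℂ) • q := by funext m; simp [sub_eq_add_neg]
  rw [h]
  exact hMem_add hw hr hp (hMem_smul hw (lt_of_lt_of_le one_pos hr) _ hq)

lemma NN_le_ofReal_of_EE_le {a : ℤ → ℝ} (hr : 0 < r) {c : ℝ} (hc : 0 ≤ c)
    (h : EE a r p ≤ ENNReal.ofReal (c ^ r)) : NN a r p ≤ ENNReal.ofReal c := by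
  rw [NN]
  calc (EE a r p) ^ (1/r) ≤ (ENNReal.ofReal (c ^ r)) ^ (1/r) :=
        ENNReal.rpow_le_rpow h (by positivity)
    _ = ENNReal.ofReal c := by
        rw [ENNReal.ofReal_rpow_of_nonneg (by positivity) (by positivity), rpow_cancel hc hr.ne']

lemma T_sum {k s : ℝ} {w : ℤ → ℝ} (hw : ∀ m, 0 < w m) (hs : 1 ≤ s)
    (T : (ℤ → ℂ) → ℤ → ℂ)
    (hTadd : ∀ p q, hMem k s w p → hMem k s w q → T (p + q) = T p + T q)
    (hTsmul : ∀ (a : ℂ) p, hMem k s w p → T (a • p) = a • T p)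
    (y : ℕ → ℤ → ℂ) (hy : ∀ i, hMem k s w (y i)) (c : ℕ → ℂ) (N : ℕ) :
    hMem k s w (∑ i ∈ Finset.range N, c i • y i) ∧
      T (∑ i ∈ Finset.range N, c i • y i) = ∑ i ∈ Finset.range N, c i • T (y i) := by
  have hs0 : 0 < s := lt_of_lt_of_le one_pos hs
  induction N with
  | zero =>
    simp only [Finset.range_zero, Finset.sum_empty]
    refine ⟨hMem_zero hw hs0, ?_⟩
    have h1 := hTsmul 0 (y 0) (hy 0)
    rw [zero_smul, zero_smul] at h1
    exact h1
  | succ n ih =>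
    rw [Finset.sum_range_succ, Finset.sum_range_succ]
    have hcy : hMem k s w (c n • y n) := hMem_smul hw hs0 _ (hy n)
    refine ⟨hMem_add hw hs ih.1 hcy, ?_⟩
    rw [hTadd _ _ ih.1 hcy, ih.2, hTsmul (c n) (y n) (hy n)]

end Bridge

end PittAux


open PittAux in
/-- Pitt's property: if `s > t ≥ 1`, every bounded linear
operator `T : h^{k,s}_{ℂ,w} → h^{k,t}_{ℂ,w}` is compact. -/
theorem stmt_15 (s t k : ℝ) (ht : 1 ≤ t) (hts : t < s) (w : ℤ → ℝ)
    (hw : ∀ m, 0 < w m) (T : (ℤ → ℂ) → ℤ → ℂ)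
    (hTadd : ∀ p q : ℤ → ℂ, hMem k s w p → hMem k s w q →
      T (p + q) = T p + T q)
    (hTsmul : ∀ (a : ℂ) (p : ℤ → ℂ), hMem k s w p → T (a • p) = a • T p)
    (hTmaps : ∀ p : ℤ → ℂ, hMem k s w p → hMem k t w (T p))
    (hTbdd : ∃ C : ℝ, ∀ p : ℤ → ℂ, hMem k s w p →
      hNorm k t w (T p) ≤ C * hNorm k s w p) :
    ∀ F : ℕ → ℤ → ℂ, (∀ n, hMem k s w (F n)) →
      (∃ C : ℝ, ∀ n, hNorm k s w (F n) ≤ C) →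
      ∃ φ : ℕ → ℕ, StrictMono φ ∧ ∃ q : ℤ → ℂ, hMem k t w q ∧
        Tendsto (fun n => hNorm k t w (T (F (φ n)) - q)) atTop (𝓝 0) := by
  intro F hFmem hFbdd
  obtain ⟨C₀, hC₀⟩ := hFbdd
  obtain ⟨C, hC⟩ := hTbdd
  have hs1 : 1 < s := lt_of_le_of_lt ht hts
  have hss : 1 ≤ s := hs1.le
  have hs0 : 0 < s := lt_trans one_pos hs1
  have ht0 : 0 < t := lt_of_lt_of_le one_pos ht
  have hApos : ∀ m, 0 < wt k s w m := wt_pos hw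
  have hBpos : ∀ m, 0 < wt k t w m := wt_pos hw
  have hAnn : ∀ m, 0 ≤ wt k s w m := fun m => (hApos m).le
  have hBnn : ∀ m, 0 ≤ wt k t w m := fun m => (hBpos m).le
  have hnorms : ∀ p : ℤ → ℂ, 0 ≤ hNorm k s w p := fun p => by
    rw [hNorm_eq hw]; positivity
  have hnormt : ∀ p : ℤ → ℂ, 0 ≤ hNorm k t w p := fun p => by
    rw [hNorm_eq hw]; positivity
  set M₀ : ℝ := max C₀ 0 with hM₀def
  have hM₀nn : 0 ≤ M₀ := le_max_right _ _
  have hM₀ : ∀ n, hNorm k s w (F n) ≤ M₀ := fun n => (hC₀ n).trans (le_max_left _ _)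
  set C' : ℝ := max C 0 with hC'def
  have hC'nn : (0:ℝ) ≤ C' := le_max_right _ _
  have hC'bd : ∀ p, hMem k s w p → hNorm k t w (T p) ≤ C' * hNorm k s w p :=
    fun p hp => (hC p hp).trans (mul_le_mul_of_nonneg_right (le_max_left _ _) (hnorms p))
  have hFfin : ∀ n, EE (wt k s w) s (F n) ≠ ⊤ := fun n => (hMem_iff hw).mp (hFmem n)
  have hFE : ∀ n, EE (wt k s w) s (F n) ≤ ENNReal.ofReal (M₀ ^ s) := fun n =>
    EE_le_ofReal hs0 (hFfin n) (by rw [← hNorm_eq hw]; exact hM₀ n)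
  obtain ⟨φ, hφ, p, hp⟩ := ptw F (fun m => (M₀ ^ s / wt k s w m) ^ (1/s))
    (fun n m => coord_bound hs0 hApos (by positivity) (hFE n) m)
  have hpE : EE (wt k s w) s p ≤ ENNReal.ofReal (M₀ ^ s) :=
    EE_le_of_tendsto hs0.le (fun i => F (φ i)) _ hp (fun i => hFE (φ i))
  have hpfin : EE (wt k s w) s p ≠ ⊤ := ne_top_of_le_ne_top ENNReal.ofReal_ne_top hpE
  have hpmem : hMem k s w p := (hMem_iff hw).mpr hpfin
  refine ⟨φ, hφ, T p, hTmaps p hpmem, ?_⟩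
  set G : ℕ → ℤ → ℂ := fun n => F (φ n) - p with hGdef
  have hGmem : ∀ n, hMem k s w (G n) := fun n => hMem_sub hw hss (hFmem (φ n)) hpmem
  have hgoal : (fun n => hNorm k t w (T (F (φ n)) - T p)) =
      fun n => hNorm k t w (T (G n)) := by
    funext n
    congr 1
    have h1 : G n + p = F (φ n) := by funext m; simp [hGdef]
    have h2 := hTadd (G n) p (hGmem n) hpmem
    rw [h1] at h2
    rw [h2, add_sub_cancel_right]
  rw [hgoal]
  by_contra hcon
  have hfreq : ∃ ε > 0, ∃ᶠ n in atTop, ε ≤ hNorm k t w (T (G n)) := by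
    by_contra hno
    push_neg at hno
    apply hcon
    rw [Metric.tendsto_atTop]
    intro ε hε
    have h1 := hno ε hε
    have h2 : ∀ᶠ n in atTop, hNorm k t w (T (G n)) < ε := by
      filter_upwards [h1] with n hn
      exact hn
    obtain ⟨N₀, hN₀⟩ := Filter.eventually_atTop.mp h2
    exact ⟨N₀, fun n hn => by
      rw [Real.dist_eq, sub_zero, abs_of_nonneg (hnormt _)]
      exact hN₀ n hn⟩
  obtain ⟨ε, hεpos, hfr⟩ := hfreq
  obtain ⟨ψ, hψ, hψε⟩ := Filter.extraction_of_frequently_atTop hfr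
  set M₁ : ℝ := 2 * M₀ with hM₁def
  have hM₁nn : (0:ℝ) ≤ M₁ := by positivity
  have hGNN : ∀ n, NN (wt k s w) s (G n) ≤ ENNReal.ofReal M₁ := by
    intro n
    have h1 : G n = F (φ n) + (-1 : ℂ) • p := by
      funext m; simp [hGdef, sub_eq_add_neg]
    rw [h1]
    calc NN (wt k s w) s (F (φ n) + (-1:ℂ) • p)
        ≤ NN (wt k s w) s (F (φ n)) + NN (wt k s w) s ((-1:ℂ) • p) := NN_add_le hss hAnn
      _ = NN (wt k s w) s (F (φ n)) + NN (wt k s w) s p := by rw [NN_smul (-1:ℂ) (by simp)]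
      _ ≤ ENNReal.ofReal M₀ + ENNReal.ofReal M₀ :=
          add_le_add (NN_le_ofReal_of_EE_le hs0 hM₀nn (by
            rw [← rpow_cancel hM₀nn hs0.ne'] at hFE
            exact (hFE (φ n)).trans (le_of_eq (by rw [rpow_cancel hM₀nn hs0.ne']))))
            (NN_le_ofReal_of_EE_le hs0 hM₀nn hpE)
      _ = ENNReal.ofReal M₁ := by
          rw [← ENNReal.ofReal_add hM₀nn hM₀nn, hM₁def]; ring_nf
  have hGnorm : ∀ n, hNorm k s w (G n) ≤ M₁ := fun n => by
    rw [hNorm_eq hw]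
    exact hnorm_le_of_NN_le hs0 hM₁nn (hGNN n)
  have hGfin : ∀ n, EE (wt k s w) s (G n) ≠ ⊤ := fun n => (hMem_iff hw).mp (hGmem n)
  have hGE : ∀ n, EE (wt k s w) s (G n) ≤ ENNReal.ofReal (M₁ ^ s) := fun n =>
    EE_le_ofReal hs0 (hGfin n) (by rw [← hNorm_eq hw]; exact hGnorm n)
  set M₂ : ℝ := C' * M₁ with hM₂def
  have hM₂nn : (0:ℝ) ≤ M₂ := by positivity
  have hTGnorm : ∀ n, hNorm k t w (T (G n)) ≤ M₂ := fun n =>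
    (hC'bd _ (hGmem n)).trans (mul_le_mul_of_nonneg_left (hGnorm n) hC'nn)
  have hTGmem : ∀ n, hMem k t w (T (G n)) := fun n => hTmaps _ (hGmem n)
  have hTGfin : ∀ n, EE (wt k t w) t (T (G n)) ≠ ⊤ := fun n => (hMem_iff hw).mp (hTGmem n)
  have hTGE : ∀ n, EE (wt k t w) t (T (G n)) ≤ ENNReal.ofReal (M₂ ^ t) := fun n =>
    EE_le_ofReal ht0 (hTGfin n) (by rw [← hNorm_eq hw]; exact hTGnorm n)
  have hGptw : ∀ m, Tendsto (fun n => G n m) atTop (𝓝 0) := by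
    intro m
    have h1 : Tendsto (fun n => F (φ n) m - p m) atTop (𝓝 (p m - p m)) :=
      (hp m).sub tendsto_const_nhds
    rw [sub_self] at h1
    exact h1
  set H : ℕ → ℤ → ℂ := fun i => G (ψ i) with hHdef
  obtain ⟨ψ₂, hψ₂, g, hg⟩ := ptw (fun i => T (H i)) (fun m => (M₂ ^ t / wt k t w m) ^ (1/t))
    (fun i m => coord_bound ht0 hBpos (by positivity) (hTGE (ψ i)) m)
  set K : ℕ → ℤ → ℂ := fun i => H (ψ₂ i) with hKdef
  have hKmem : ∀ i, hMem k s w (K i) := fun i => hGmem _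
  have hKE : ∀ i, EE (wt k s w) s (K i) ≤ ENNReal.ofReal (M₁ ^ s) := fun i => hGE _
  have hKptw : ∀ m, Tendsto (fun i => K i m) atTop (𝓝 0) := fun m =>
    ((hGptw m).comp hψ.tendsto_atTop).comp hψ₂.tendsto_atTop
  have hTKfin : ∀ i, EE (wt k t w) t (T (K i)) ≠ ⊤ := fun i => hTGfin _
  have hTKeps : ∀ i, ENNReal.ofReal (ε ^ t) ≤ EE (wt k t w) t (T (K i)) := fun i => by
    refine ofReal_rpow_le_EE ht0 hεpos.le ?_
    rw [← hNorm_eq hw]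
    exact hψε (ψ₂ i)
  have hNNop : ∀ x, hMem k s w x →
      NN (wt k t w) t (T x) ≤ ENNReal.ofReal C' * NN (wt k s w) s x := by
    intro x hx
    have hfx : EE (wt k s w) s x ≠ ⊤ := (hMem_iff hw).mp hx
    have hfTx : EE (wt k t w) t (T x) ≠ ⊤ := (hMem_iff hw).mp (hTmaps x hx)
    rw [NN_eq_ofReal ht0 hfTx, NN_eq_ofReal hs0 hfx, ← ENNReal.ofReal_mul hC'nn]
    refine ENNReal.ofReal_le_ofReal ?_
    rw [← hNorm_eq hw, ← hNorm_eq hw]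
    exact hC'bd x hx
  by_cases hg0 : ∀ m, g m = 0
  · refine caseA hAnn hBnn hss ht hts K (fun i => T (K i)) M₁ C' ε hM₁nn hC'nn hεpos
      hKE hTKfin hKptw ?_ hTKeps ?_
    · intro m
      have h1 := hg m
      rw [hg0 m] at h1
      exact h1
    · intro n N
      obtain ⟨hxmem, hxsum⟩ := T_sum hw hss T hTadd hTsmul (fun i => K (n i))
        (fun i => hKmem _) (fun _ => 1) N
      simp only [one_smul] at hxmem hxsum
      rw [← hxsum]
      exact hNNop _ hxmem
  · push_neg at hg0
    obtain ⟨m₀, hm₀⟩ := hg0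
    set c₀ : ℝ := ‖g m₀‖ with hc₀def
    have hc₀pos : 0 < c₀ := by rwa [hc₀def, norm_pos_iff]
    have habs : Tendsto (fun i => ‖T (K i) m₀‖) atTop (𝓝 c₀) :=
      continuous_norm.continuousAt.tendsto.comp (hg m₀)
    have hev : ∀ᶠ i in atTop, c₀/2 ≤ ‖T (K i) m₀‖ := by
      filter_upwards [habs.eventually_const_lt (show c₀/2 < c₀ by linarith)] with i hi
      exact hi.le
    obtain ⟨i₀, hi₀⟩ := Filter.eventually_atTop.mp hev
    refine caseB hAnn hs1 ht (fun i => K (i + i₀)) (fun i => T (K (i + i₀))) M₁ C'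
      hM₁nn hC'nn (fun i => hKE _) (fun m => (hKptw m).comp (tendsto_add_atTop_nat i₀))
      m₀ (c₀/2) (by linarith) (hBpos m₀) (fun i => hi₀ _ (Nat.le_add_left i₀ i)) ?_
    intro n θ hθ N
    show ENNReal.ofReal (wt k t w m₀ *
        ‖(∑ i ∈ Finset.range N, θ i • T (K (n i + i₀))) m₀‖ ^ t) ≤
      (ENNReal.ofReal C' * NN (wt k s w) s (∑ i ∈ Finset.range N, θ i • K (n i + i₀))) ^ t
    obtain ⟨hxmem, hxsum⟩ := T_sum hw hss T hTadd hTsmul (fun i => K (n i + i₀))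
      (fun i => hKmem _) θ N
    rw [← hxsum]
    refine (EE_coord m₀).trans ?_
    rw [EE_eq_NN_rpow ht0]
    exact ENNReal.rpow_le_rpow (hNNop _ hxmem) ht0.le
end
end
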